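/- arXiv:2010.15539 — 9 statements merged into one kernel-verified Lean document; each statement's English description precedes it below -/
import Mathlib

section
/- For a connected weighted network C on d ≥ 2 vertices with unit total weight, the maximum vertex weight satisfies max_i c_i ≤ γ, where γ = max(|1-λ_2|, |1-λ_d|) and λ_2, λ_d are the second-smallest and largest eigenvalues of the Laplacian Δ = I - D^{-1}C with respect to the weighted inner product. -/
/-- For a connected weighted network `C` on `d ≥ 2` vertices with unit
total weight, `max_i c_i ≤ γ`, where `γ = max (|1-λ_2|) (|1-λ_d|)` and `λ_2, λ_d`
are the second-smallest and largest eigenvalues of `Δ = I - D⁻¹C` with respect to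
the weighted inner product. -/
theorem max_degree_le_gamma
    (d : ℕ) (hd : 2 ≤ d) (C : Fin d → Fin d → ℝ)
    (hsym : ∀ i j, C i j = C j i)
    (hnonneg : ∀ i j, 0 ≤ C i j)
    (hdiag : ∀ i, C i i = 0)
    (hconn : ∀ i j : Fin d, Relation.ReflTransGen (fun a b => 0 < C a b) i j)
    (c : Fin d → ℝ) (hc : ∀ i, c i = ∑ j, C i j)
    (hcpos : ∀ i, 0 < c i)
    (htot : ∑ i, c i = 1)
    -- eigendecomposition of Δ with respect to the weighted inner product:
    (μ : Fin d → ℝ) (v : Fin d → Fin d → ℝ)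
    (heig : ∀ k i, v k i - (∑ j, C i j * v k j) / c i = μ k * v k i)
    (horth : ∀ k l, (∑ i, c i * v k i * v l i) = if k = l then (1:ℝ) else 0)
    (hmono : Monotone μ)
    (hzero : μ ⟨0, by omega⟩ = 0)
    (hgap : 0 < μ ⟨1, by omega⟩)
    (gam : ℝ)
    (hgam : gam = max |1 - μ ⟨1, by omega⟩| |1 - μ ⟨d - 1, by omega⟩|) :
    ∀ i, c i ≤ gam := by
  classical
  intro i0
  have hccpos := hcpos i0
  obtain ⟨j0, hj0⟩ : ∃ j : Fin d, j ≠ i0 := by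
    have h1 : 1 < Fintype.card (Fin d) := by simp; omega
    exact Fintype.exists_ne_of_one_lt_card h1 i0
  have hrest : ∑ j ∈ Finset.univ.erase i0, c j = 1 - c i0 := by
    have h := Finset.add_sum_erase Finset.univ c (Finset.mem_univ i0)
    rw [htot] at h
    linarith
  have hcc1 : c i0 < 1 := by
    have h1 : c j0 ≤ ∑ j ∈ Finset.univ.erase i0, c j :=
      Finset.single_le_sum (fun i _ => (hcpos i).le)
        (Finset.mem_erase.mpr ⟨hj0, Finset.mem_univ _⟩)
    have := hcpos j0
    linarith
  set cc := c i0 with hccdef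
  have h1c : 0 < 1 - cc := by linarith
  set a : ℝ := Real.sqrt ((1 - cc) / cc) with hadef
  set b : ℝ := -Real.sqrt (cc / (1 - cc)) with hbdef
  have ha2 : a * a = (1 - cc) / cc := Real.mul_self_sqrt (by positivity)
  have hb2 : b * b = cc / (1 - cc) := by
    rw [hbdef, neg_mul_neg]
    exact Real.mul_self_sqrt (by positivity)
  have hab : a * b = -1 := by
    rw [hadef, hbdef, mul_neg, ← Real.sqrt_mul (by positivity)]
    rw [show (1 - cc) / cc * (cc / (1 - cc)) = 1 by
      field_simp]
    simp
  set p : Fin d → ℝ := fun j => if j = i0 then a else b with hp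
  set α : Fin d → ℝ := fun k => ∑ j, c j * p j * v k j with hα
  -- completeness of the eigenbasis
  have hcomp : ∀ i j : Fin d, (∑ k, v k i * v k j) = if i = j then 1 / c i else 0 := by
    intro i j
    set A : Matrix (Fin d) (Fin d) ℝ := Matrix.of (fun k i => Real.sqrt (c i) * v k i) with hA
    have hAAt : A * A.transpose = 1 := by
      ext k l
      simp only [Matrix.mul_apply, Matrix.transpose_apply, Matrix.one_apply, hA, Matrix.of_apply]
      rw [← horth k l]
      apply Finset.sum_congr rfl
      intro i _
      rw [show Real.sqrt (c i) * v k i * (Real.sqrt (c i) * v l i)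
            = (Real.sqrt (c i) * Real.sqrt (c i)) * (v k i * v l i) by ring,
          Real.mul_self_sqrt (hcpos i).le]
      ring
    have hAtA : A.transpose * A = 1 := mul_eq_one_comm.mp hAAt
    have h := congrFun (congrFun hAtA i) j
    simp only [Matrix.mul_apply, Matrix.transpose_apply, Matrix.one_apply, hA,
      Matrix.of_apply] at h
    have h2 : (Real.sqrt (c i) * Real.sqrt (c j)) * ∑ k, v k i * v k j
        = if i = j then 1 else 0 := by
      rw [Finset.mul_sum, ← h]
      apply Finset.sum_congr rfl
      intro k _
      ring
    by_cases hij : i = j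
    · subst hij
      rw [Real.mul_self_sqrt (hcpos i).le] at h2
      simp only [if_pos rfl] at h2 ⊢
      simp only [if_true] at h2 ⊢
      rw [eq_div_iff (hcpos i).ne']
      linarith
    · simp only [if_neg hij] at h2 ⊢
      have hpos : 0 < Real.sqrt (c i) * Real.sqrt (c j) :=
        mul_pos (Real.sqrt_pos.mpr (hcpos i)) (Real.sqrt_pos.mpr (hcpos j))
      exact (mul_eq_zero.mp h2).resolve_left hpos.ne'
  -- expansion of p in the eigenbasis
  have hexp : ∀ i, ∑ k, α k * v k i = p i := by
    intro i
    calc ∑ k, α k * v k i = ∑ k, ∑ j, c j * p j * v k j * v k i := by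
          apply Finset.sum_congr rfl
          intro k _
          rw [hα]
          rw [Finset.sum_mul]
      _ = ∑ j, ∑ k, c j * p j * v k j * v k i := Finset.sum_comm
      _ = ∑ j, c j * p j * ∑ k, v k j * v k i := by
          apply Finset.sum_congr rfl
          intro j _
          rw [Finset.mul_sum]
          apply Finset.sum_congr rfl
          intro k _
          ring
      _ = ∑ j, c j * p j * (if j = i then 1 / c i else 0) := by
          apply Finset.sum_congr rfl
          intro j _
          rw [hcomp j i]
          by_cases hji : j = i
          · subst hji; simp
          · simp [hji]
      _ = p i := by
          simp only [mul_ite, mul_zero]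
          rw [Finset.sum_ite_eq' Finset.univ i (fun j => c j * p j * (1 / c i))]
          simp only [Finset.mem_univ, if_pos]
          field_simp
          exact mul_div_cancel_left₀ (p i) (hcpos i).ne'
  -- norm identity
  have hnorm : ∑ k, α k * α k = ∑ j, c j * p j * p j := by
    calc ∑ k, α k * α k = ∑ k, ∑ j, c j * p j * v k j * α k := by
          apply Finset.sum_congr rfl
          intro k _
          conv_lhs => rw [hα]
          rw [Finset.sum_mul]
      _ = ∑ j, ∑ k, c j * p j * v k j * α k := Finset.sum_comm
      _ = ∑ j, c j * p j * ∑ k, α k * v k j := by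
          apply Finset.sum_congr rfl
          intro j _
          rw [Finset.mul_sum]
          apply Finset.sum_congr rfl
          intro k _
          ring
      _ = ∑ j, c j * p j * p j := by
          apply Finset.sum_congr rfl
          intro j _
          rw [hexp j]
  have hpnorm : ∑ j, c j * p j * p j = 1 := by
    rw [← Finset.add_sum_erase Finset.univ (fun j => c j * p j * p j) (Finset.mem_univ i0)]
    have h1 : ∀ j ∈ Finset.univ.erase i0, c j * p j * p j = c j * (b * b) := by
      intro j hj
      have : j ≠ i0 := (Finset.mem_erase.mp hj).1
      simp [hp, this]
      ring
    rw [Finset.sum_congr rfl h1]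
    rw [← Finset.sum_mul, hrest]
    have hpi0 : p i0 = a := by simp [hp]
    rw [hpi0]
    rw [show c i0 * a * a = cc * (a * a) by rw [hccdef]; ring, ha2, hb2]
    field_simp
    ring
  have hα1 : ∑ k, α k * α k = 1 := hnorm.trans hpnorm
  -- eigen equation rearranged
  have heig' : ∀ k i, (∑ j, C i j * v k j) = c i * ((1 - μ k) * v k i) := by
    intro k i
    have h := heig k i
    have h2 : (∑ j, C i j * v k j) / c i = v k i - μ k * v k i := by linarith
    rw [div_eq_iff (hcpos i).ne'] at h2
    rw [h2]
    ring
  -- spectral expression of the quadratic form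
  have hS : ∑ i, p i * ∑ j, C i j * p j = ∑ k, α k * α k * (1 - μ k) := by
    have hinner : ∀ i, ∑ j, C i j * p j = ∑ k, α k * (c i * ((1 - μ k) * v k i)) := by
      intro i
      calc ∑ j, C i j * p j = ∑ j, C i j * ∑ k, α k * v k j := by
            apply Finset.sum_congr rfl
            intro j _
            rw [hexp j]
        _ = ∑ j, ∑ k, C i j * (α k * v k j) := by
            apply Finset.sum_congr rfl
            intro j _
            rw [Finset.mul_sum]
        _ = ∑ k, ∑ j, C i j * (α k * v k j) := Finset.sum_comm
        _ = ∑ k, α k * ∑ j, C i j * v k j := by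
            apply Finset.sum_congr rfl
            intro k _
            rw [Finset.mul_sum]
            apply Finset.sum_congr rfl
            intro j _
            ring
        _ = ∑ k, α k * (c i * ((1 - μ k) * v k i)) := by
            apply Finset.sum_congr rfl
            intro k _
            rw [heig' k i]
    calc ∑ i, p i * ∑ j, C i j * p j
        = ∑ i, ∑ k, (1 - μ k) * α k * (c i * p i * v k i) := by
          apply Finset.sum_congr rfl
          intro i _
          rw [hinner i, Finset.mul_sum]
          apply Finset.sum_congr rfl
          intro k _
          ring
      _ = ∑ k, ∑ i, (1 - μ k) * α k * (c i * p i * v k i) := Finset.sum_comm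
      _ = ∑ k, (1 - μ k) * α k * ∑ i, c i * p i * v k i := by
          apply Finset.sum_congr rfl
          intro k _
          exact (Finset.mul_sum _ _ _).symm
      _ = ∑ k, α k * α k * (1 - μ k) := by
          apply Finset.sum_congr rfl
          intro k _
          rw [show (∑ i, c i * p i * v k i) = α k from (by rw [hα])]
          ring
  -- direct computation of the quadratic form
  have hcol : ∑ i, C i i0 = cc := by
    rw [hccdef, hc i0]
    apply Finset.sum_congr rfl
    intro i _
    exact hsym i i0
  have hcp : ∑ i, c i * p i = cc * a + (1 - cc) * b := by
    rw [← Finset.add_sum_erase Finset.univ (fun j => c j * p j) (Finset.mem_univ i0)]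
    have h1 : ∀ j ∈ Finset.univ.erase i0, c j * p j = c j * b := by
      intro j hj
      have : j ≠ i0 := (Finset.mem_erase.mp hj).1
      simp [hp, this]
    rw [Finset.sum_congr rfl h1, ← Finset.sum_mul, hrest]
    simp [hp, hccdef]
  have hpC : ∑ i, p i * C i i0 = b * cc := by
    rw [← Finset.add_sum_erase Finset.univ (fun i => p i * C i i0) (Finset.mem_univ i0)]
    have h1 : ∀ j ∈ Finset.univ.erase i0, p j * C j i0 = b * C j i0 := by
      intro j hj
      have : j ≠ i0 := (Finset.mem_erase.mp hj).1
      simp [hp, this]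
    rw [Finset.sum_congr rfl h1, ← Finset.mul_sum]
    have h2 : ∑ j ∈ Finset.univ.erase i0, C j i0 = cc := by
      have h3 := Finset.add_sum_erase Finset.univ (fun i => C i i0) (Finset.mem_univ i0)
      rw [hcol, hdiag i0] at h3
      linarith
    rw [h2]
    simp [hp, hdiag i0]
  have hSval : ∑ i, p i * ∑ j, C i j * p j = -(cc / (1 - cc)) := by
    have hinner2 : ∀ i, ∑ j, C i j * p j = c i * b + C i i0 * (a - b) := by
      intro i
      calc ∑ j, C i j * p j
          = ∑ j, (C i j * b + (if j = i0 then C i j * (a - b) else 0)) := by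
            apply Finset.sum_congr rfl
            intro j _
            by_cases h : j = i0
            · subst h; simp [hp]; ring
            · simp [hp, h]
        _ = (∑ j, C i j) * b + C i i0 * (a - b) := by
            rw [Finset.sum_add_distrib, ← Finset.sum_mul,
              Finset.sum_ite_eq' Finset.univ i0 (fun j => C i j * (a - b))]
            simp
        _ = c i * b + C i i0 * (a - b) := by rw [← hc i]
    calc ∑ i, p i * ∑ j, C i j * p j
        = ∑ i, (c i * p i * b + p i * C i i0 * (a - b)) := by
          apply Finset.sum_congr rfl
          intro i _
          rw [hinner2 i]
          ring
      _ = (∑ i, c i * p i) * b + (∑ i, p i * C i i0) * (a - b) := by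
          rw [Finset.sum_add_distrib, ← Finset.sum_mul, ← Finset.sum_mul]
      _ = (cc * a + (1 - cc) * b) * b + (b * cc) * (a - b) := by rw [hcp, hpC]
      _ = 2 * cc * (a * b) + (1 - 2 * cc) * (b * b) := by ring
      _ = -(cc / (1 - cc)) := by
          rw [hab, hb2]
          field_simp
          ring
  -- spectral lower bound
  have hgam0 : 0 ≤ gam := by
    rw [hgam]
    exact le_trans (abs_nonneg _) (le_max_left _ _)
  have hmu_ub : ∀ k : Fin d, -gam ≤ 1 - μ k := by
    intro k
    have hk : k ≤ (⟨d - 1, by omega⟩ : Fin d) := by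
      rw [Fin.le_def]
      have := k.isLt
      simp
      omega
    have h1 : μ k ≤ μ ⟨d - 1, by omega⟩ := hmono hk
    have h2 : |1 - μ ⟨d - 1, by omega⟩| ≤ gam := by rw [hgam]; exact le_max_right _ _
    have h3 : μ (⟨d - 1, by omega⟩ : Fin d) - 1 ≤ |1 - μ ⟨d - 1, by omega⟩| := by
      rw [abs_sub_comm]
      exact le_abs_self _
    linarith
  have hSlb : -gam ≤ ∑ k, α k * α k * (1 - μ k) := by
    have hterm : ∀ k ∈ Finset.univ, α k * α k * (-gam) ≤ α k * α k * (1 - μ k) :=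
      fun k _ => mul_le_mul_of_nonneg_left (hmu_ub k) (mul_self_nonneg _)
    calc -gam = (∑ k, α k * α k) * (-gam) := by rw [hα1]; ring
      _ = ∑ k, α k * α k * (-gam) := by rw [Finset.sum_mul]
      _ ≤ ∑ k, α k * α k * (1 - μ k) := Finset.sum_le_sum hterm
  have hfin : cc / (1 - cc) ≤ gam := by
    have h := hSval ▸ hS
    rw [hS] at hSval
    linarith
  have hlast : cc ≤ cc / (1 - cc) := by
    rw [le_div_iff₀ h1c]
    nlinarith
  linarith
end

section
/- Let ε(σ², p) be a centered normal with variance σ² conditioned to [-p, 1-p]. For all σ > 0 and p ∈ [0, 1/2], the mean satisfies 0 ≤ E[ε(σ², p)] ≤ 2σ exp(-p²/(2σ²)). -/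
open MeasureTheory
open scoped NNReal ENNReal

/-- The law of the truncated normal `ε(σ², p)`: a centered normal with variance `σ²`
conditioned to lie in `[-p, 1-p]`. -/
noncomputable def truncGaussLaw (σ p : ℝ) : Measure ℝ :=
  (volume.restrict (Set.Icc (-p) (1 - p))).withDensity
    (fun x => ENNReal.ofReal (Real.exp (-x ^ 2 / (2 * σ ^ 2)) /
      ∫ y in Set.Icc (-p) (1 - p), Real.exp (-y ^ 2 / (2 * σ ^ 2))))

lemma truncGauss_exp_half : Real.exp (-(1/2) : ℝ) ≥ 1/2 := by
  have h2 : Real.exp (1/2) * Real.exp (1/2) = Real.exp 1 := by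
    rw [← Real.exp_add]; norm_num
  have h3 : Real.exp (-(1/2) : ℝ) * Real.exp (1/2) = 1 := by
    rw [← Real.exp_add]; norm_num [Real.exp_zero]
  nlinarith [Real.exp_one_lt_d9, Real.exp_pos (1/2 : ℝ), Real.exp_pos (-(1/2) : ℝ)]

set_option maxHeartbeats 1600000 in
/-- For all `σ > 0` and `p ∈ [0, 1/2]`, the mean of the truncated
normal satisfies `0 ≤ E[ε(σ², p)] ≤ 2σ exp(-p²/(2σ²))`. -/
theorem truncGauss_mean_bounds (σ p : ℝ) (hσ : 0 < σ)
    (hp : p ∈ Set.Icc (0:ℝ) (1/2)) :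
    0 ≤ ∫ x, x ∂(truncGaussLaw σ p) ∧
    ∫ x, x ∂(truncGaussLaw σ p) ≤ 2 * σ * Real.exp (-p ^ 2 / (2 * σ ^ 2)) := by
  obtain ⟨hp0, hp2⟩ := hp
  set g : ℝ → ℝ := fun x => Real.exp (-x ^ 2 / (2 * σ ^ 2)) with hgdef
  set s : Set ℝ := Set.Icc (-p) (1 - p) with hsdef
  set Z : ℝ := ∫ y in s, g y with hZdef
  have hg_cont : Continuous g := by
    apply Real.continuous_exp.comp
    exact (continuous_pow 2).neg.div_const _
  have hg_pos : ∀ x, 0 < g x := fun x => Real.exp_pos _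
  have hg_int : IntegrableOn g s := hg_cont.integrableOn_Icc
  have hab : -p ≤ 1 - p := by linarith
  set m : ℝ := min σ (1 - p) with hmdef
  have hm0 : 0 < m := lt_min hσ (by linarith)
  have hms : Set.Icc 0 m ⊆ s := by
    apply Set.Icc_subset_Icc (by linarith) (min_le_right _ _)
  -- lower bound on Z
  have hZ_lb : m * Real.exp (-(1/2) : ℝ) ≤ Z := by
    have h1 : Real.exp (-(1/2) : ℝ) * ((volume (Set.Icc (0:ℝ) m)).toReal)
        ≤ ∫ y in Set.Icc (0:ℝ) m, g y := by
      apply setIntegral_ge_of_const_le_real measurableSet_Icc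
      · simp [Real.volume_Icc]
      · intro x hx
        obtain ⟨hx0, hxm⟩ := hx
        have hxσ : x ≤ σ := hxm.trans (min_le_left _ _)
        apply Real.exp_le_exp.2
        rw [neg_div, neg_le_neg_iff, div_le_div_iff₀ (by positivity) (by norm_num : (0:ℝ) < 2)]
        nlinarith
      · exact hg_cont.integrableOn_Icc
    have h2 : ∫ y in Set.Icc (0:ℝ) m, g y ≤ Z := by
      apply setIntegral_mono_set hg_int
      · exact Filter.Eventually.of_forall fun x => (hg_pos x).le
      · exact Filter.Eventually.of_forall hms
    have h3 : (volume (Set.Icc (0:ℝ) m)).toReal = m := by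
      simp [Real.volume_Icc, ENNReal.toReal_ofReal hm0.le]
    rw [h3] at h1
    linarith
  have hZpos : 0 < Z := by
    have : 0 < m * Real.exp (-(1/2) : ℝ) := by positivity
    linarith
  -- the mean formula
  have hF : ∀ x : ℝ, HasDerivAt (fun y => -σ ^ 2 * g y) (x * g x) x := by
    intro x
    have h1 : HasDerivAt (fun y : ℝ => -y ^ 2 / (2 * σ ^ 2))
        (-(2 * x ^ 1) / (2 * σ ^ 2)) x := by
      simpa [neg_div] using ((hasDerivAt_pow 2 x).neg.div_const (2 * σ ^ 2))
    have h2 := h1.exp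
    have h3 := h2.const_mul (-σ ^ 2)
    refine h3.congr_deriv ?_
    have hσ2 : (σ:ℝ) ^ 2 ≠ 0 := by positivity
    simp only [hgdef]
    field_simp
  have hint_xg : ∫ x in s, x * g x = σ ^ 2 * (g p - g (1 - p)) := by
    rw [hsdef, MeasureTheory.integral_Icc_eq_integral_Ioc,
      ← intervalIntegral.integral_of_le hab]
    rw [intervalIntegral.integral_eq_sub_of_hasDerivAt (fun x _ => hF x)
      ((continuous_id.mul hg_cont).intervalIntegrable _ _)]
    have hgp : g (-p) = g p := by simp [hgdef]
    rw [hgp]; ring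
  have hmean : ∫ x, x ∂(truncGaussLaw σ p) = σ ^ 2 * (g p - g (1 - p)) * Z⁻¹ := by
    have hrepr : truncGaussLaw σ p = (volume.restrict s).withDensity
        (fun x => ((Real.toNNReal (g x / Z) : ℝ≥0) : ℝ≥0∞)) := rfl
    rw [hrepr, integral_withDensity_eq_integral_smul
      (((hg_cont.measurable).div_const Z).real_toNNReal) (fun x => x)]
    have : ∀ x : ℝ, (Real.toNNReal (g x / Z)) • x = (x * g x) * Z⁻¹ := by
      intro x
      rw [NNReal.smul_def, Real.coe_toNNReal _ (div_nonneg (hg_pos x).le hZpos.le)]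
      rw [smul_eq_mul]
      ring
    rw [show (fun x : ℝ => (Real.toNNReal (g x / Z)) • x)
        = fun x : ℝ => (x * g x) * Z⁻¹ from funext this]
    rw [integral_mul_const, hint_xg]
  have ht : g (1 - p) = g p * Real.exp (-((1 - 2*p) / (2 * σ ^ 2))) := by
    rw [hgdef]
    simp only
    rw [← Real.exp_add]
    congr 1
    field_simp
    ring
  have hg_mono : g (1 - p) ≤ g p := by
    apply Real.exp_le_exp.2
    rw [div_le_div_iff₀ (by positivity) (by positivity)]
    nlinarith
  clear_value m Z s g
  constructor
  · rw [hmean]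
    have h0 : 0 ≤ σ ^ 2 * (g p - g (1 - p)) := by nlinarith
    exact mul_nonneg h0 (inv_nonneg.2 hZpos.le)
  · rw [hmean]
    have hgoal : σ ^ 2 * (g p - g (1 - p)) ≤ 2 * σ * g p * Z := by
      have hkey : σ ^ 2 * (g p - g (1 - p))
          ≤ 2 * σ * g p * (m * Real.exp (-(1/2) : ℝ)) := by
        rcases le_total σ (1 - p) with hA | hB
        · rw [hmdef, min_eq_left hA]
          have h1 : g p - g (1 - p) ≤ g p := by
            have := (hg_pos (1 - p)).le; linarith
          have hE := truncGauss_exp_half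
          calc σ ^ 2 * (g p - g (1 - p)) ≤ σ ^ 2 * g p :=
                mul_le_mul_of_nonneg_left h1 (sq_nonneg σ)
            _ ≤ 2 * σ * g p * (σ * Real.exp (-(1/2) : ℝ)) := by
                nlinarith [mul_nonneg (mul_nonneg (sq_nonneg σ) (hg_pos p).le)
                  (by linarith : (0:ℝ) ≤ 2 * Real.exp (-(1/2) : ℝ) - 1)]
        · rw [hmdef, min_eq_right hB]
          have hexp := Real.add_one_le_exp (-((1 - 2*p) / (2 * σ ^ 2)))
          have hN : g p - g (1 - p) ≤ g p * ((1 - 2*p) / (2 * σ ^ 2)) := by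
            rw [ht]
            nlinarith [hg_pos p]
          have hN2 : σ ^ 2 * (g p - g (1 - p)) ≤ g p * (1 - 2*p) / 2 := by
            have h := mul_le_mul_of_nonneg_left hN (sq_nonneg σ)
            have hσ2 : (σ:ℝ) ^ 2 ≠ 0 := by positivity
            calc σ ^ 2 * (g p - g (1 - p)) ≤ σ ^ 2 * (g p * ((1 - 2*p) / (2 * σ ^ 2))) := h
              _ = g p * (1 - 2*p) / 2 := by field_simp
          have hE := truncGauss_exp_half
          have hA0 := hg_pos p
          have h2σe : 1 - p ≤ 2 * σ * Real.exp (-(1/2) : ℝ) := by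
            nlinarith [mul_le_mul_of_nonneg_left hE hσ.le]
          have hq : (0:ℝ) ≤ 1/2 - p + p ^ 2 := by nlinarith [sq_nonneg (2*p - 1)]
          nlinarith [mul_nonneg hA0.le hq, hN2,
            mul_le_mul_of_nonneg_left h2σe (mul_nonneg hA0.le (by linarith : (0:ℝ) ≤ 1 - p))]
      calc σ ^ 2 * (g p - g (1 - p)) ≤ 2 * σ * g p * (m * Real.exp (-(1/2) : ℝ)) := hkey
        _ ≤ 2 * σ * g p * Z := by
            apply mul_le_mul_of_nonneg_left hZ_lb
            exact mul_nonneg (by positivity) (hg_pos p).le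
    calc σ ^ 2 * (g p - g (1 - p)) * Z⁻¹ ≤ (2 * σ * g p * Z) * Z⁻¹ := by
          apply mul_le_mul_of_nonneg_right hgoal
          exact inv_nonneg.2 hZpos.le
      _ = 2 * σ * g p := by field_simp
      _ = 2 * σ * Real.exp (-p ^ 2 / (2 * σ ^ 2)) := by rw [hgdef]
end

section
/- Let ε(σ², p) be a centered normal with variance σ² conditioned to [-p, 1-p]. For all σ > 0 and p ∈ [0,1], Var(ε(σ², p)) ≤ σ² and E[ε(σ², p)²] ≤ 5σ². -/
open MeasureTheory ProbabilityTheory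

lemma truncGauss_key (σ a b : ℝ) (hσ : 0 < σ) (ha : a ≤ 0) (hb : 0 ≤ b) :
    ∫ x in a..b, x ^ 2 * Real.exp (-x ^ 2 / (2 * σ ^ 2)) ≤
      σ ^ 2 * ∫ x in a..b, Real.exp (-x ^ 2 / (2 * σ ^ 2)) := by
  have hσ2 : (0:ℝ) < σ ^ 2 := by positivity
  have hwc : Continuous fun x : ℝ => Real.exp (-x ^ 2 / (2 * σ ^ 2)) := by
    exact Real.continuous_exp.comp ((continuous_pow 2).neg.div_const _)
  have hd : ∀ x : ℝ, HasDerivAt (fun x => σ ^ 2 * x * Real.exp (-x ^ 2 / (2 * σ ^ 2)))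
      ((σ ^ 2 - x ^ 2) * Real.exp (-x ^ 2 / (2 * σ ^ 2))) x := by
    intro x
    have h1 : HasDerivAt (fun x : ℝ => -x ^ 2 / (2 * σ ^ 2)) (-(2 * x) / (2 * σ ^ 2)) x := by
      simpa using ((hasDerivAt_pow 2 x).neg.div_const (2 * σ ^ 2))
    have h2 := h1.exp
    have h3 : HasDerivAt (fun x : ℝ => σ ^ 2 * x) (σ ^ 2) x := by
      simpa using (hasDerivAt_id x).const_mul (σ ^ 2)
    have h4 : HasDerivAt (fun x => σ ^ 2 * x * Real.exp (-x ^ 2 / (2 * σ ^ 2)))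
        (σ ^ 2 * Real.exp (-x ^ 2 / (2 * σ ^ 2)) + σ ^ 2 * x * (Real.exp (-x ^ 2 / (2 * σ ^ 2)) * (-(2 * x) / (2 * σ ^ 2)))) x :=
      h3.mul h2
    convert h4 using 1
    field_simp
    ring
  have hcont : Continuous fun x : ℝ => (σ ^ 2 - x ^ 2) * Real.exp (-x ^ 2 / (2 * σ ^ 2)) :=
    ((continuous_const.sub (continuous_pow 2)).mul hwc)
  have heq := intervalIntegral.integral_eq_sub_of_hasDerivAt (f := fun x =>
      σ ^ 2 * x * Real.exp (-x ^ 2 / (2 * σ ^ 2)))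
    (fun x _ => hd x) (hcont.intervalIntegrable a b)
  have hsplit : ∫ x in a..b, (σ ^ 2 - x ^ 2) * Real.exp (-x ^ 2 / (2 * σ ^ 2)) =
      σ ^ 2 * (∫ x in a..b, Real.exp (-x ^ 2 / (2 * σ ^ 2))) -
        ∫ x in a..b, x ^ 2 * Real.exp (-x ^ 2 / (2 * σ ^ 2)) := by
    rw [← intervalIntegral.integral_const_mul, ← intervalIntegral.integral_sub (f := fun x => σ ^ 2 * Real.exp (-x ^ 2 / (2 * σ ^ 2)))
      (g := fun x => x ^ 2 * Real.exp (-x ^ 2 / (2 * σ ^ 2)))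
      ((continuous_const.mul hwc).intervalIntegrable a b) (((continuous_pow 2).mul hwc).intervalIntegrable a b)]
    congr 1
    funext x
    ring
  have hbnd : 0 ≤ σ ^ 2 * b * Real.exp (-b ^ 2 / (2 * σ ^ 2)) -
      σ ^ 2 * a * Real.exp (-a ^ 2 / (2 * σ ^ 2)) := by
    have h1 : 0 ≤ σ ^ 2 * b * Real.exp (-b ^ 2 / (2 * σ ^ 2)) := by positivity
    have h2 : σ ^ 2 * a * Real.exp (-a ^ 2 / (2 * σ ^ 2)) ≤ 0 :=
      mul_nonpos_of_nonpos_of_nonneg (mul_nonpos_of_nonneg_of_nonpos hσ2.le ha)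
        (Real.exp_pos _).le
    linarith
  rw [hsplit] at heq
  linarith [heq, hbnd]

/-- For all `σ > 0` and `p ∈ [0,1]`,
`Var(ε(σ², p)) ≤ σ²` and `E[ε(σ², p)²] ≤ 5σ²`. -/
theorem truncGauss_variance_upper_bounds (σ p : ℝ) (hσ : 0 < σ)
    (hp : p ∈ Set.Icc (0:ℝ) 1) :
    variance (fun x => x) (truncGaussLaw σ p) ≤ σ ^ 2 ∧
    ∫ x, x ^ 2 ∂(truncGaussLaw σ p) ≤ 5 * σ ^ 2 := by
  obtain ⟨hp0, hp1⟩ := hp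
  have hab : (-p) < 1 - p := by linarith
  have ha : (-p) ≤ 0 := by linarith
  have hb : (0:ℝ) ≤ 1 - p := by linarith
  have hσ2 : (0:ℝ) < σ ^ 2 := by positivity
  set S : Set ℝ := Set.Icc (-p) (1 - p) with hS
  set w : ℝ → ℝ := fun x => Real.exp (-x ^ 2 / (2 * σ ^ 2)) with hw
  have hwc : Continuous w := Real.continuous_exp.comp ((continuous_pow 2).neg.div_const _)
  set Z : ℝ := ∫ y in S, w y with hZ
  have hIccInt : ∀ f : ℝ → ℝ, (∫ y in S, f y) = ∫ y in (-p)..(1 - p), f y := by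
    intro f
    rw [intervalIntegral.integral_of_le hab.le, hS, integral_Icc_eq_integral_Ioc]
  have hZpos : 0 < Z := by
    rw [hZ, hIccInt]
    exact intervalIntegral.intervalIntegral_pos_of_pos (hwc.intervalIntegrable _ _)
      (fun x => Real.exp_pos _) hab
  -- general integral formula against the truncated law
  have hInt : ∀ g : ℝ → ℝ, Continuous g →
      (∫ x, g x ∂(truncGaussLaw σ p)) = (∫ x in S, w x * g x) / Z := by
    intro g hg
    have hmeas : Measurable fun x => Real.toNNReal (w x / Z) :=
      (continuous_real_toNNReal.comp (hwc.div_const Z)).measurable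
    calc ∫ x, g x ∂(truncGaussLaw σ p)
        = ∫ x, (Real.toNNReal (w x / Z) : ℝ) • g x ∂(volume.restrict S) := by
          rw [truncGaussLaw]
          exact integral_withDensity_eq_integral_smul hmeas g
      _ = ∫ x in S, (w x / Z) * g x := by
          refine integral_congr_ae (Filter.Eventually.of_forall fun x => ?_)
          have hx : (0:ℝ) ≤ w x / Z := by positivity
          show (Real.toNNReal (w x / Z) : ℝ) • g x = w x / Z * g x
          rw [smul_eq_mul, Real.coe_toNNReal _ hx]
      _ = (∫ x in S, w x * g x) / Z := by
          rw [← integral_div]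
          congr 1
          funext x
          ring
  have hprob : IsProbabilityMeasure (truncGaussLaw σ p) := by
    constructor
    rw [truncGaussLaw, withDensity_apply _ MeasurableSet.univ, Measure.restrict_univ]
    have hint : Integrable (fun x => w x / Z) (volume.restrict S) :=
      ((hwc.div_const Z).integrableOn_Icc)
    rw [← ofReal_integral_eq_lintegral_ofReal hint
      (Filter.Eventually.of_forall fun x => by positivity)]
    rw [integral_div, ← hZ, div_self hZpos.ne']
    simp
  have hE2 : (∫ x, x ^ 2 ∂(truncGaussLaw σ p)) ≤ σ ^ 2 := by
    rw [hInt (fun x => x ^ 2) (continuous_pow 2)]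
    rw [div_le_iff₀ hZpos]
    have hkey := truncGauss_key σ (-p) (1 - p) hσ ha hb
    have h1 : (∫ x in S, w x * x ^ 2) = ∫ x in (-p)..(1 - p), x ^ 2 * w x := by
      rw [hIccInt]
      congr 1
      funext x
      ring
    rw [h1]
    calc ∫ x in (-p)..(1 - p), x ^ 2 * w x ≤ σ ^ 2 * ∫ x in (-p)..(1 - p), w x := hkey
      _ = σ ^ 2 * Z := by rw [hZ, hIccInt]
  have hvar : variance (fun x => x) (truncGaussLaw σ p) ≤ σ ^ 2 := by
    have hm : AEStronglyMeasurable (fun x : ℝ => x) (truncGaussLaw σ p) :=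
      measurable_id.aestronglyMeasurable
    have := variance_le_expectation_sq (μ := truncGaussLaw σ p) hm
    have heq : ((fun x : ℝ => x) ^ 2) = fun x : ℝ => x ^ 2 := by
      funext x; simp
    rw [heq] at this
    exact this.trans hE2
  exact ⟨hvar, hE2.trans (by nlinarith)⟩
end

section
/- There exists ρ ∈ (0,1) such that for all σ ≤ 1 and all p ∈ [0,1], the truncated normal ε(σ², p) (centered normal with variance σ² conditioned to [-p, 1-p]) satisfies Var(ε(σ², p)) ≥ ρσ². -/
open MeasureTheory ProbabilityTheory Real

lemma tg_integrable {σ : ℝ} (hσ : 0 < σ) :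
    Integrable (fun x : ℝ => Real.exp (-x ^ 2 / (2 * σ ^ 2))) := by
  have h : ∀ x : ℝ, -x ^ 2 / (2 * σ ^ 2) = -(1/(2*σ^2)) * x ^ 2 := fun x => by ring
  simp_rw [h]
  exact integrable_exp_neg_mul_sq (by positivity)

lemma tg_C_pos {σ p : ℝ} (hσ : 0 < σ) :
    0 < ∫ y in Set.Icc (-p) (1 - p), Real.exp (-y ^ 2 / (2 * σ ^ 2)) := by
  have hlt : (-p : ℝ) < 1 - p := by linarith
  rw [MeasureTheory.integral_Icc_eq_integral_Ioc,
    ← intervalIntegral.integral_of_le hlt.le]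
  exact intervalIntegral.intervalIntegral_pos_of_pos
    ((tg_integrable hσ).intervalIntegrable) (fun x => Real.exp_pos _) hlt

lemma tg_C_le {σ p : ℝ} (hσ : 0 < σ) :
    (∫ y in Set.Icc (-p) (1 - p), Real.exp (-y ^ 2 / (2 * σ ^ 2)))
      ≤ σ * Real.sqrt (2 * π) := by
  have h1 : (∫ y in Set.Icc (-p) (1 - p), Real.exp (-y ^ 2 / (2 * σ ^ 2)))
      ≤ ∫ y : ℝ, Real.exp (-y ^ 2 / (2 * σ ^ 2)) :=
    setIntegral_le_integral (tg_integrable hσ) (ae_of_all _ fun x => (Real.exp_pos _).le)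
  refine h1.trans (le_of_eq ?_)
  have h : ∀ x : ℝ, -x ^ 2 / (2 * σ ^ 2) = -(1/(2*σ^2)) * x ^ 2 := fun x => by ring
  simp_rw [h, integral_gaussian]
  rw [show π / (1/(2*σ^2)) = σ^2 * (2*π) by field_simp,
    Real.sqrt_mul (by positivity), Real.sqrt_sq hσ.le]

/-- There exists `ρ ∈ (0,1)` such that for all `0 < σ ≤ 1` and all
`p ∈ [0,1]`, `Var(ε(σ², p)) ≥ ρσ²`. -/
theorem truncGauss_variance_lower_bound :
    ∃ ρ ∈ Set.Ioo (0:ℝ) 1, ∀ σ p : ℝ, 0 < σ → σ ≤ 1 → p ∈ Set.Icc (0:ℝ) 1 →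
      ρ * σ ^ 2 ≤ variance (fun x => x) (truncGaussLaw σ p) := by
  have hsqrt : (1:ℝ) ≤ Real.sqrt (2 * π) := by
    rw [show (1:ℝ) = Real.sqrt 1 by simp]
    exact Real.sqrt_le_sqrt (by nlinarith [Real.pi_gt_three])
  refine ⟨Real.exp (-(1:ℝ)/8) / (864 * Real.sqrt (2 * π)), ⟨by positivity, ?_⟩, ?_⟩
  · rw [div_lt_one (by positivity)]
    calc Real.exp (-(1:ℝ)/8) ≤ 1 := by
          rw [Real.exp_le_one_iff]; norm_num
      _ < 864 * Real.sqrt (2*π) := by nlinarith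
  intro σ p hσ hσ1 hp
  set ρ := Real.exp (-(1:ℝ)/8) / (864 * Real.sqrt (2 * π)) with hρ
  set I := Set.Icc (-p) (1 - p) with hI
  set g := fun x : ℝ => Real.exp (-x ^ 2 / (2 * σ ^ 2)) with hg
  set C := ∫ y in I, g y with hC
  have hCpos : 0 < C := tg_C_pos hσ
  have hCle : C ≤ σ * Real.sqrt (2 * π) := tg_C_le hσ
  set μ := truncGaussLaw σ p with hμ
  have hμdef : μ = (volume.restrict I).withDensity (fun x => ENNReal.ofReal (g x / C)) := rfl
  -- probability measure
  have hIOn : IntegrableOn (fun x => g x / C) I volume := by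
    exact ((tg_integrable hσ).div_const C).integrableOn
  have hprob : IsProbabilityMeasure μ := by
    constructor
    rw [hμdef, withDensity_apply _ MeasurableSet.univ, Measure.restrict_univ,
      ← ofReal_integral_eq_lintegral_ofReal hIOn
        (ae_of_all _ fun x => by positivity)]
    rw [integral_div, ← hC, div_self hCpos.ne']
    simp
  -- a.e. bound on the identity
  have hac : μ ≪ volume.restrict I := by
    rw [hμdef]; exact withDensity_absolutelyContinuous _ _
  have haemem : ∀ᵐ x ∂μ, x ∈ I := hac.ae_le (ae_restrict_mem measurableSet_Icc)
  have haebdd : ∀ᵐ x ∂μ, x ∈ Set.Icc (-1 : ℝ) 1 := by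
    filter_upwards [haemem] with x hx
    obtain ⟨hp0, hp1⟩ := hp
    exact ⟨by linarith [hx.1], by linarith [hx.2]⟩
  have hmem : MemLp (fun x : ℝ => x) 2 μ :=
    memLp_of_bounded haebdd aestronglyMeasurable_id 2
  have hevar_fin : evariance (fun x : ℝ => x) μ ≠ ⊤ := hmem.evariance_lt_top.ne
  set m := μ[fun x : ℝ => x] with hm
  -- choice of the interval
  set a := if p ≤ 1/2 then (0:ℝ) else -(σ/2) with ha
  have hsub1 : Set.Icc a (a + σ/2) ⊆ I := by
    obtain ⟨hp0, hp1⟩ := hp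
    rw [ha]
    split_ifs with h
    · intro x hx
      exact ⟨by simp at hx ⊢; linarith [hx.1], by simp at hx ⊢; linarith [hx.2]⟩
    · push_neg at h
      intro x hx
      exact ⟨by simp at hx ⊢; linarith [hx.1], by simp at hx ⊢; linarith [hx.2]⟩
  have hsub2 : Set.Icc a (a + σ/2) ⊆ Set.Icc (-(σ/2)) (σ/2) := by
    rw [ha]; split_ifs with h
    · intro x hx; exact ⟨by simp at hx ⊢; linarith [hx.1], by simp at hx ⊢; linarith [hx.2]⟩
    · intro x hx; exact ⟨by simp at hx ⊢; linarith [hx.1], by simp at hx ⊢; linarith [hx.2]⟩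
  -- pick subinterval J far from the mean
  obtain ⟨j, hjsub, hjdist⟩ :
      ∃ j : ℝ, Set.Icc j (j + σ/6) ⊆ Set.Icc a (a + σ/2) ∧
        ∀ x ∈ Set.Icc j (j + σ/6), (σ/12)^2 ≤ (x - m)^2 := by
    rcases le_or_gt m (a + σ/4) with hmle | hmgt
    · refine ⟨a + σ/3, fun x hx => ⟨by simp at hx ⊢; linarith [hx.1], by simp at hx ⊢; linarith [hx.2]⟩,
        fun x hx => ?_⟩
      have h1 : σ/12 ≤ x - m := by simp at hx; linarith [hx.1]
      nlinarith [sq_nonneg (x - m - σ/12)]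
    · refine ⟨a, fun x hx => ⟨hx.1, by simp at hx ⊢; linarith [hx.2]⟩, fun x hx => ?_⟩
      have h1 : σ/12 ≤ m - x := by simp at hx; linarith [hx.2]
      nlinarith [sq_nonneg (m - x - σ/12)]
  set J := Set.Icc j (j + σ/6) with hJ
  -- mass of J
  have hdens_lb : ∀ x ∈ J, Real.exp (-(1:ℝ)/8) / C ≤ g x / C := by
    intro x hx
    have hx2 : x^2 ≤ σ^2/4 := by
      obtain ⟨h1, h2⟩ := hsub2 (hjsub hx)
      nlinarith
    gcongr
    rw [hg, Real.exp_le_exp]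
    rw [neg_div, neg_div, neg_le_neg_iff, div_le_div_iff₀ (by positivity) (by norm_num)]
    nlinarith
  have hJI : J ⊆ I := fun x hx => hsub1 (hjsub hx)
  have hvolJ : volume J = ENNReal.ofReal (σ/6) := by
    rw [hJ, Real.volume_Icc, show j + σ/6 - j = σ/6 by ring]
  have hμJ : ENNReal.ofReal (Real.exp (-(1:ℝ)/8) / C) * ENNReal.ofReal (σ/6) ≤ μ J := by
    rw [hμdef, withDensity_apply _ measurableSet_Icc,
      Measure.restrict_restrict measurableSet_Icc,
      Set.inter_eq_self_of_subset_left hJI]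
    calc ENNReal.ofReal (Real.exp (-(1:ℝ)/8) / C) * ENNReal.ofReal (σ/6)
        = ∫⁻ _ in J, ENNReal.ofReal (Real.exp (-(1:ℝ)/8) / C) ∂volume := by
          rw [setLIntegral_const, hvolJ]
      _ ≤ ∫⁻ x in J, ENNReal.ofReal (g x / C) ∂volume :=
          setLIntegral_mono' measurableSet_Icc fun x hx =>
            ENNReal.ofReal_le_ofReal (hdens_lb x hx)
  have hkey : ρ * σ^2 ≤ (σ/12)^2 * (Real.exp (-(1:ℝ)/8)/C * (σ/6)) := by
    have expr : (σ/12)^2 * (Real.exp (-(1:ℝ)/8)/C * (σ/6))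
        = Real.exp (-(1:ℝ)/8) * σ^3 / (864 * C) := by field_simp; ring
    rw [expr, hρ, div_mul_eq_mul_div,
      div_le_div_iff₀ (by positivity) (by positivity)]
    have he : (0:ℝ) < Real.exp (-(1:ℝ)/8) := Real.exp_pos _
    nlinarith [mul_le_mul_of_nonneg_left hCle
      (by positivity : (0:ℝ) ≤ Real.exp (-(1:ℝ)/8) * σ^2 * 864)]
  have hev : ENNReal.ofReal (ρ * σ^2) ≤ evariance (fun x : ℝ => x) μ := by
    rw [evariance_eq_lintegral_ofReal]
    calc ENNReal.ofReal (ρ * σ^2)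
        ≤ ENNReal.ofReal ((σ/12)^2) *
            (ENNReal.ofReal (Real.exp (-(1:ℝ)/8) / C) * ENNReal.ofReal (σ/6)) := by
          rw [← ENNReal.ofReal_mul (by positivity), ← ENNReal.ofReal_mul (by positivity)]
          exact ENNReal.ofReal_le_ofReal hkey
      _ ≤ ENNReal.ofReal ((σ/12)^2) * μ J := mul_le_mul_right hμJ _
      _ = ∫⁻ _ in J, ENNReal.ofReal ((σ/12)^2) ∂μ := (setLIntegral_const _ _).symm
      _ ≤ ∫⁻ x in J, ENNReal.ofReal ((x - m)^2) ∂μ :=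
          setLIntegral_mono' measurableSet_Icc fun x hx =>
            ENNReal.ofReal_le_ofReal (hjdist x hx)
      _ ≤ ∫⁻ x, ENNReal.ofReal ((x - m)^2) ∂μ := setLIntegral_le_lintegral _ _
  have hfinal := ENNReal.toReal_mono hevar_fin hev
  rwa [ENNReal.toReal_ofReal (by positivity)] at hfinal
end

section
/- For all x ≥ 0, the standard normal density f and CDF F satisfy x f(x)/F(x) + (f(x)/F(x))² < 1; equivalently, 1 - x f(x)/F(x) - (f(x)/F(x))² > 0. -/
open Real

private lemma exp_neg_le_inv_one_add {t : ℝ} (ht : 0 ≤ t) :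
    Real.exp (-t) * (1 + t) ≤ 1 := by
  have h1 : 1 + t ≤ Real.exp t := by linarith [Real.add_one_le_exp t]
  have h2 : (0:ℝ) < Real.exp (-t) := Real.exp_pos _
  have h3 : Real.exp (-t) * (1 + t) ≤ Real.exp (-t) * Real.exp t :=
    mul_le_mul_of_nonneg_left h1 h2.le
  rw [← Real.exp_add] at h3; simpa using h3


private lemma gauss_aux_poly {x A B : ℝ} (hx : 0 ≤ x) (hA0 : 0 < A) (hB0 : 0 < B)
    (hA : A * (1 + (x - 1) ^ 2 / 2) ≤ 1) (hB : B * (1 + x ^ 2) ≤ 1) :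
    0.4841 * A + 0.6367 * B < 1 := by
  have hD1 : (0:ℝ) < 1 + (x - 1) ^ 2 / 2 := by positivity
  have hD2 : (0:ℝ) < 1 + x ^ 2 := by positivity
  have hA' : A ≤ 1 / (1 + (x - 1) ^ 2 / 2) := by
    rw [le_div_iff₀ hD1]; linarith
  have hB' : B ≤ 1 / (1 + x ^ 2) := by
    rw [le_div_iff₀ hD2]; linarith
  have key : 0.4841 * (1 + x ^ 2) + 0.6367 * (1 + (x - 1) ^ 2 / 2)
      < (1 + (x - 1) ^ 2 / 2) * (1 + x ^ 2) := by
    nlinarith [sq_nonneg (x ^ 2 - x + 0.2), sq_nonneg (x - 0.2), sq_nonneg x,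
      sq_nonneg (x - 1), mul_nonneg hx (sq_nonneg (x - 1)), mul_nonneg hx (sq_nonneg x)]
  calc 0.4841 * A + 0.6367 * B
      ≤ 0.4841 * (1 / (1 + (x - 1) ^ 2 / 2)) + 0.6367 * (1 / (1 + x ^ 2)) := by
        have h1 := mul_le_mul_of_nonneg_left hA' (by norm_num : (0:ℝ) ≤ 0.4841)
        have h2 := mul_le_mul_of_nonneg_left hB' (by norm_num : (0:ℝ) ≤ 0.6367)
        linarith
    _ = (0.4841 * (1 + x ^ 2) + 0.6367 * (1 + (x - 1) ^ 2 / 2))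
        / ((1 + (x - 1) ^ 2 / 2) * (1 + x ^ 2)) := by
        field_simp
    _ < 1 := by
        rw [div_lt_one (by positivity)]; exact key

/-- For all `x ≥ 0`, the standard normal density `f` and CDF `F`
satisfy `x f(x)/F(x) + (f(x)/F(x))² < 1`. -/
theorem gaussian_hazard_inequality
    (f F : ℝ → ℝ)
    (hf : ∀ x, f x = (Real.sqrt (2 * π))⁻¹ * Real.exp (-x ^ 2 / 2))
    (hF : ∀ x, F x = ∫ t in Set.Iic x, f t)
    (x : ℝ) (hx : 0 ≤ x) :
    x * (f x / F x) + (f x / F x) ^ 2 < 1 := by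
  have hπ : (0:ℝ) < π := Real.pi_pos
  have h2π : (0:ℝ) < 2 * π := by linarith
  have hsqrt : (0:ℝ) < Real.sqrt (2 * π) := Real.sqrt_pos.mpr h2π
  set c : ℝ := (Real.sqrt (2 * π))⁻¹ with hc
  have hcpos : 0 < c := inv_pos.mpr hsqrt
  have hc2 : c ^ 2 = (2 * π)⁻¹ := by
    rw [hc, inv_pow, Real.sq_sqrt h2π.le]
  -- f rewritten
  have hfe : f = fun t => c * Real.exp (-(1/2) * t ^ 2) := by
    funext t; rw [hf t]; ring_nf
  have hfpos : ∀ t, 0 < f t := by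
    intro t; rw [hfe]; positivity
  -- integrability
  have hint : MeasureTheory.Integrable f := by
    rw [hfe]
    exact (integrable_exp_neg_mul_sq (by norm_num : (0:ℝ) < 1/2)).const_mul c
  -- total integral is 1
  have htotal : (∫ t, f t) = 1 := by
    rw [hfe]
    rw [MeasureTheory.integral_const_mul, integral_gaussian]
    rw [hc]
    rw [show π / (1/2 : ℝ) = 2 * π by ring]
    field_simp
  -- symmetry: ∫ Iic 0 = ∫ Ioi 0
  have hsymm : (∫ t in Set.Iic (0:ℝ), f t) = ∫ t in Set.Ioi (0:ℝ), f t := by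
    have := integral_comp_neg_Iic (0:ℝ) f
    rw [neg_zero] at this
    rw [← this]
    refine MeasureTheory.setIntegral_congr_fun measurableSet_Iic fun t _ => ?_
    rw [hfe]; simp [neg_pow]
  have hhalf : (∫ t in Set.Iic (0:ℝ), f t) = 1/2 := by
    have hadd := intervalIntegral.integral_Iic_add_Ioi (b := (0:ℝ))
      hint.integrableOn hint.integrableOn
    rw [htotal, ← hsymm] at hadd
    linarith
  -- F x ≥ 1/2
  have hFge : (1:ℝ)/2 ≤ F x := by
    rw [hF, ← hhalf]
    apply MeasureTheory.setIntegral_mono_set hint.integrableOn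
    · exact MeasureTheory.ae_of_all _ fun t => (hfpos t).le
    · exact MeasureTheory.ae_of_all _ (Set.Iic_subset_Iic.mpr hx)
  have hFpos : 0 < F x := by linarith
  -- hazard ratio bound
  have hr : f x / F x ≤ 2 * f x := by
    rw [div_le_iff₀ hFpos]
    nlinarith [(hfpos x).le]
  have hrpos : 0 < f x / F x := div_pos (hfpos x) hFpos
  -- abbreviations
  set A : ℝ := Real.exp (-((x - 1) ^ 2 / 2)) with hA
  set B : ℝ := Real.exp (-(x ^ 2)) with hB
  have hApos : 0 < A := Real.exp_pos _
  have hBpos : 0 < B := Real.exp_pos _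
  have hAle : A * (1 + (x - 1) ^ 2 / 2) ≤ 1 := by
    have := exp_neg_le_inv_one_add (t := (x - 1) ^ 2 / 2) (by positivity)
    linarith
  have hBle : B * (1 + x ^ 2) ≤ 1 := by
    have := exp_neg_le_inv_one_add (t := x ^ 2) (by positivity)
    linarith
  -- bound: x * (2 f x) ≤ (2c e^{-1/2}) * A
  have hxexp : x * Real.exp (-x ^ 2 / 2) ≤ Real.exp (-(1:ℝ)/2) * A := by
    have h1 : x ≤ Real.exp (x - 1) := by
      have := Real.add_one_le_exp (x - 1); linarith
    calc x * Real.exp (-x ^ 2 / 2) ≤ Real.exp (x - 1) * Real.exp (-x ^ 2 / 2) :=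
          mul_le_mul_of_nonneg_right h1 (Real.exp_pos _).le
      _ = Real.exp (-(1:ℝ)/2) * A := by
          rw [hA, ← Real.exp_add, ← Real.exp_add]; ring_nf
  -- define K = 2c * exp(-1/2)
  set K : ℝ := 2 * c * Real.exp (-(1:ℝ)/2) with hK
  have hKpos : 0 < K := by positivity
  have hK2 : K ^ 2 = (2 / π) * Real.exp (-1 : ℝ) := by
    have he : Real.exp (-(1:ℝ)/2) ^ 2 = Real.exp (-1:ℝ) := by
      rw [sq, ← Real.exp_add]; norm_num
    rw [hK, mul_pow, mul_pow, he, hc2]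
    field_simp
  -- numeric bound on K
  have hexp1 : Real.exp (-1 : ℝ) < 0.368 := by
    have h := Real.exp_one_gt_d9
    have hmul : Real.exp (-1 : ℝ) * Real.exp 1 = 1 := by
      rw [← Real.exp_add]; norm_num
    have h4 := mul_lt_mul_of_pos_left h (Real.exp_pos (-1:ℝ))
    rw [hmul] at h4
    linarith
  have hπgt : (3.1415:ℝ) < π := by
    have := Real.pi_gt_d6; linarith
  have hKle : K ≤ 0.4841 := by
    have h2 : (2:ℝ) / π ≤ 2 / 3.1415 :=
      div_le_div_of_nonneg_left (by norm_num) (by norm_num) hπgt.le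
    have h3 : (0:ℝ) ≤ Real.exp (-1:ℝ) := (Real.exp_pos _).le
    have h1 : K ^ 2 ≤ 0.4841 ^ 2 := by
      rw [hK2]
      calc (2/π) * Real.exp (-1:ℝ) ≤ (2/3.1415) * 0.368 :=
            mul_le_mul h2 hexp1.le h3 (by norm_num)
        _ ≤ 0.4841 ^ 2 := by norm_num
    exact (pow_le_pow_iff_left₀ hKpos.le (by norm_num) (by norm_num)).mp h1
  have h2πle : (2:ℝ) / π ≤ 0.6367 := by
    rw [div_le_iff₀ hπ]; nlinarith
  -- main chain
  have hE2 : Real.exp (-x ^ 2 / 2) ^ 2 = B := by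
    rw [hB, ← Real.exp_nat_mul]; norm_num; ring_nf
  have step1 : x * (f x / F x) + (f x / F x) ^ 2 ≤ x * (2 * f x) + (2 * f x) ^ 2 := by
    have h1 : x * (f x / F x) ≤ x * (2 * f x) := mul_le_mul_of_nonneg_left hr hx
    have h2 : (f x / F x) ^ 2 ≤ (2 * f x) ^ 2 := by nlinarith
    linarith
  have step2 : x * (2 * f x) + (2 * f x) ^ 2 ≤ K * A + (2 / π) * B := by
    have hx2 : x * (2 * f x) = 2 * c * (x * Real.exp (-x ^ 2 / 2)) := by
      rw [hf x]; ring
    have hx3 : x * (2 * f x) ≤ K * A := by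
      rw [hx2, hK]
      calc 2 * c * (x * Real.exp (-x ^ 2 / 2)) ≤ 2 * c * (Real.exp (-(1:ℝ)/2) * A) := by
            apply mul_le_mul_of_nonneg_left hxexp (by positivity)
        _ = 2 * c * Real.exp (-(1:ℝ)/2) * A := by ring
    have hf2 : (2 * f x) ^ 2 = (2 / π) * B := by
      rw [hf x, mul_pow, mul_pow, hc2, hE2]
      field_simp
    have hf2' : (2 * f x) ^ 2 ≤ (2 / π) * B := le_of_eq hf2
    exact add_le_add hx3 hf2'
  have step3 : K * A + (2 / π) * B ≤ 0.4841 * A + 0.6367 * B :=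
    add_le_add (mul_le_mul_of_nonneg_right hKle hApos.le)
      (mul_le_mul_of_nonneg_right h2πle hBpos.le)
  have step4 : 0.4841 * A + 0.6367 * B < 1 :=
    gauss_aux_poly hx hApos hBpos hAle hBle
  calc x * (f x / F x) + (f x / F x) ^ 2 ≤ x * (2 * f x) + (2 * f x) ^ 2 := step1
    _ ≤ K * A + (2 / π) * B := step2
    _ ≤ 0.4841 * A + 0.6367 * B := step3
    _ < 1 := step4
end

section
/- Fix σ ∈ (0, ∞) and let Γ(p, ·) be the inverse CDF of the random variable p + ε(σ², p) on [0,1], where ε(σ², p) is the centered truncated normal on [-p, 1-p]. Then for all p, u ∈ [0,1], the partial derivative ∂Γ/∂p (p, u) lies in [0, 1]. -/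
open Real

set_option maxHeartbeats 2000000 in
/-- Fix `σ ∈ (0,∞)` and let `Γ(p, ·)` be the inverse CDF of
`X_p = p + ε(σ², p)` on `[0,1]`, where the CDF is
`Φ(p,u) = (∫₀ᵘ f((x-p)/σ) dx) / (F((1-p)/σ) + F(p/σ) - 1)`
with `f, F` the standard normal density and CDF. Then for all `p, u ∈ [0,1]`,
`∂Γ/∂p (p,u) ∈ [0,1]`. -/
theorem inverse_cdf_derivative_in_unit_interval
    (σ : ℝ) (hσ : 0 < σ)
    (f F : ℝ → ℝ)
    (hf : ∀ x, f x = (Real.sqrt (2 * π))⁻¹ * Real.exp (-x ^ 2 / 2))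
    (hF : ∀ x, F x = ∫ t in Set.Iic x, f t)
    (Φ : ℝ → ℝ → ℝ)
    (hΦ : ∀ p u, Φ p u =
      (∫ x in (0:ℝ)..u, f ((x - p) / σ)) / (F ((1 - p) / σ) + F (p / σ) - 1))
    (Γ : ℝ → ℝ → ℝ)
    (hΓrange : ∀ p ∈ Set.Icc (0:ℝ) 1, ∀ u ∈ Set.Icc (0:ℝ) 1,
      Γ p u ∈ Set.Icc (0:ℝ) 1)
    (hΓinv : ∀ p ∈ Set.Icc (0:ℝ) 1, ∀ u ∈ Set.Icc (0:ℝ) 1,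
      Φ p (Γ p u) = u) :
    ∀ p ∈ Set.Icc (0:ℝ) 1, ∀ u ∈ Set.Icc (0:ℝ) 1, ∀ g : ℝ,
      HasDerivAt (fun p' => Γ p' u) g p → g ∈ Set.Icc (0:ℝ) 1 := by
  open MeasureTheory intervalIntegral Set in
  set c := (Real.sqrt (2 * π))⁻¹ with hc_def
  have h2π : (0:ℝ) < Real.sqrt (2 * π) := Real.sqrt_pos.2 (by positivity)
  have hc : 0 < c := inv_pos.2 h2π
  have hfpos : ∀ x, 0 < f x := fun x => by rw [hf]; positivity
  have hfeq : f = fun x => c * Real.exp (-(1/2) * x ^ 2) := funext fun x => by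
    rw [hf x]; congr 1; ring
  have hfcont : Continuous f := by rw [hfeq]; continuity
  have hfint : Integrable f := by
    rw [hfeq]; exact (integrable_exp_neg_mul_sq one_half_pos).const_mul c
  have hftot : ∫ x, f x = 1 := by
    rw [hfeq, MeasureTheory.integral_const_mul, integral_gaussian]
    rw [show π / (1/2 : ℝ) = 2 * π by ring, hc_def]
    exact inv_mul_cancel₀ (ne_of_gt h2π)
  set N : ℝ → ℝ → ℝ := fun q w => ∫ x in (0:ℝ)..w, f ((x - q) / σ) with hN_def
  have hgcont : ∀ q : ℝ, Continuous (fun x => f ((x - q) / σ)) := fun q =>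
    hfcont.comp ((continuous_id.sub continuous_const).div_const σ)
  have hgint : ∀ q a b : ℝ, IntervalIntegrable (fun x => f ((x - q) / σ)) volume a b :=
    fun q a b => (hgcont q).intervalIntegrable a b
  -- strict monotonicity of N q
  have hNlt : ∀ q w₁ w₂ : ℝ, w₁ < w₂ → N q w₁ < N q w₂ := by
    intro q w₁ w₂ hw
    have hsplit := integral_add_adjacent_intervals (a := 0) (b := w₁) (c := w₂)
      (hgint q 0 w₁) (hgint q w₁ w₂)
    have hpos : 0 < ∫ x in w₁..w₂, f ((x - q) / σ) :=
      intervalIntegral_pos_of_pos (hgint q w₁ w₂) (fun x => hfpos _) hw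
    simp only [hN_def]; linarith [hsplit]
  have hN0 : ∀ q : ℝ, N q 0 = 0 := fun q => integral_same
  have hNpos : ∀ q : ℝ, 0 < N q 1 := fun q => by
    have := hNlt q 0 1 one_pos; rwa [hN0 q] at this
  -- denominator identity
  have hD : ∀ q : ℝ, F ((1 - q) / σ) + F (q / σ) - 1 = σ⁻¹ * N q 1 := by
    intro q
    have h1 : (∫ x in Set.Iic (q / σ), f x) + ∫ x in Set.Ioi (q / σ), f x = 1 := by
      rw [integral_Iic_add_Ioi hfint.integrableOn hfint.integrableOn, hftot]
    have h2 : (∫ x in Set.Ioi (q / σ), f x) = ∫ x in Set.Iic (-(q / σ)), f x := by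
      rw [← integral_comp_neg_Ioi]
      refine setIntegral_congr_fun measurableSet_Ioi fun x _ => ?_
      rw [hf, hf, neg_pow]; norm_num
    have h3 : F ((1 - q) / σ) + F (q / σ) - 1
        = ∫ x in (-(q / σ))..((1 - q) / σ), f x := by
      rw [hF, hF, ← integral_Iic_sub_Iic hfint.integrableOn hfint.integrableOn]
      rw [← h2]; linarith [h1]
    have h4 : N q 1 = σ * ∫ x in (-(q / σ))..((1 - q) / σ), f x := by
      have e1 : (∫ x in (0:ℝ)..1, f ((x - q) / σ))
          = ∫ x in (0 - q)..(1 - q), f (x / σ) :=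
        integral_comp_sub_right (fun y => f (y / σ)) q
      have e2 : (∫ x in (0 - q)..(1 - q), f (x / σ))
          = σ • ∫ x in ((0 - q)/σ)..((1 - q)/σ), f x :=
        integral_comp_div (f := f) (ne_of_gt hσ)
      simp only [hN_def]
      rw [e1, e2, smul_eq_mul]
      congr 2
      ring
    rw [h3, h4, ← mul_assoc, inv_mul_cancel₀ (ne_of_gt hσ), one_mul]
  have hcore : ∀ x y q₁ q₂ : ℝ, x ≤ y → q₁ ≤ q₂ →
      f ((x - q₂) / σ) * f ((y - q₁) / σ) ≤ f ((y - q₂) / σ) * f ((x - q₁) / σ) := by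
    intro x y q₁ q₂ hxy hq
    have h2π : (0:ℝ) < Real.sqrt (2 * π) := Real.sqrt_pos.2 (by positivity)
    rw [hf, hf, hf, hf]
    rw [mul_mul_mul_comm, ← Real.exp_add, mul_mul_mul_comm, ← Real.exp_add]
    have hkey : -((x - q₂) / σ) ^ 2 / 2 + -((y - q₁) / σ) ^ 2 / 2
        ≤ -((y - q₂) / σ) ^ 2 / 2 + -((x - q₁) / σ) ^ 2 / 2 := by
      have hσ2 : (0:ℝ) < σ ^ 2 := by positivity
      have h2 : (y - q₂) ^ 2 + (x - q₁) ^ 2 ≤ (x - q₂) ^ 2 + (y - q₁) ^ 2 := by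
        nlinarith [mul_nonneg (sub_nonneg.2 hxy) (sub_nonneg.2 hq)]
      rw [div_pow, div_pow, div_pow, div_pow]
      have h3 := (div_le_div_iff_of_pos_right hσ2).2 h2
      rw [add_div, add_div] at h3
      linarith
    exact mul_le_mul_of_nonneg_left (Real.exp_le_exp.2 hkey) (by positivity)
  have hNnonneg : ∀ q a b : ℝ, a ≤ b → 0 ≤ ∫ x in a..b, f ((x - q) / σ) := by
    intro q a b hab
    exact integral_nonneg hab (fun x _ => le_of_lt (hfpos _))
  -- comparison 1
  have hcomp1 : ∀ q₁ q₂ v : ℝ, q₁ ≤ q₂ → 0 ≤ v → v ≤ 1 →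
      N q₂ v * N q₁ 1 ≤ N q₁ v * N q₂ 1 := by
    intro q₁ q₂ v hq hv0 hv1
    set r : ℝ := f ((v - q₂) / σ) / f ((v - q₁) / σ) with hr_def
    have hrpos : 0 ≤ r := le_of_lt (div_pos (hfpos _) (hfpos _))
    have hA : N q₂ v ≤ r * N q₁ v := by
      rw [hN_def]
      simp only
      rw [← intervalIntegral.integral_const_mul]
      refine integral_mono_on hv0 (hgint q₂ 0 v) ((hgint q₁ 0 v).const_mul r) ?_
      intro x hx
      rw [hr_def, div_mul_eq_mul_div, le_div_iff₀ (hfpos _)]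
      exact hcore x v q₁ q₂ hx.2 hq
    have hC : r * (∫ x in v..1, f ((x - q₁) / σ)) ≤ ∫ x in v..1, f ((x - q₂) / σ) := by
      rw [← intervalIntegral.integral_const_mul]
      refine integral_mono_on hv1 ((hgint q₁ v 1).const_mul r) (hgint q₂ v 1) ?_
      intro y hy
      rw [hr_def, div_mul_eq_mul_div, div_le_iff₀ (hfpos _)]
      exact hcore v y q₁ q₂ hy.1 hq
    have hsplit1 : N q₁ 1 = N q₁ v + ∫ x in v..1, f ((x - q₁) / σ) := by
      rw [hN_def]; exact (integral_add_adjacent_intervals (hgint q₁ 0 v) (hgint q₁ v 1)).symm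
    have hsplit2 : N q₂ 1 = N q₂ v + ∫ x in v..1, f ((x - q₂) / σ) := by
      rw [hN_def]; exact (integral_add_adjacent_intervals (hgint q₂ 0 v) (hgint q₂ v 1)).symm
    have hA1 : 0 ≤ N q₁ v := by rw [hN_def]; exact hNnonneg q₁ 0 v hv0
    have hC1 : 0 ≤ ∫ x in v..1, f ((x - q₁) / σ) := hNnonneg q₁ v 1 hv1
    rw [hsplit1, hsplit2]
    nlinarith [mul_le_mul_of_nonneg_right hA hC1, mul_le_mul_of_nonneg_left hC hA1]
  -- comparison 2
  have hcomp2 : ∀ q₁ q₂ v : ℝ, q₁ ≤ q₂ → 0 ≤ v → v + (q₂ - q₁) ≤ 1 →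
      N q₁ v * N q₂ 1 ≤ N q₂ (v + (q₂ - q₁)) * N q₁ 1 := by
    intro q₁ q₂ v hq hv0 hv1
    set Δ : ℝ := q₂ - q₁ with hΔ_def
    have hΔ0 : 0 ≤ Δ := sub_nonneg.2 hq
    have htr : ∀ a b : ℝ, (∫ x in a..b, f ((x - q₂) / σ))
        = ∫ x in (a - Δ)..(b - Δ), f ((x - q₁) / σ) := by
      intro a b
      have := integral_comp_sub_right (a := a) (b := b) (fun y => f ((y - q₁) / σ)) Δ
      rw [← this]
      congr 1
      funext x
      congr 2
      ring
    set L : ℝ := ∫ x in (-Δ)..0, f ((x - q₁) / σ) with hL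
    set M : ℝ := N q₁ v with hM
    set Nn : ℝ := ∫ x in v..(1 - Δ), f ((x - q₁) / σ) with hNn
    set P : ℝ := ∫ x in (1 - Δ)..1, f ((x - q₁) / σ) with hP
    have hL0 : 0 ≤ L := hNnonneg q₁ (-Δ) 0 (by linarith)
    have hM0 : 0 ≤ M := by rw [hM, hN_def]; exact hNnonneg q₁ 0 v hv0
    have hN0 : 0 ≤ Nn := hNnonneg q₁ v (1 - Δ) (by linarith)
    have hP0 : 0 ≤ P := hNnonneg q₁ (1 - Δ) 1 (by linarith)
    have e1 : N q₂ (v + Δ) = L + M := by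
      simp only [hL, hM, hN_def]
      rw [htr 0 (v + Δ), show (0:ℝ) - Δ = -Δ by ring, show v + Δ - Δ = v by ring]
      exact (integral_add_adjacent_intervals (hgint q₁ (-Δ) 0) (hgint q₁ 0 v)).symm
    have e2 : N q₂ 1 = L + M + Nn := by
      simp only [hL, hM, hNn, hN_def]
      rw [htr 0 1, show (0:ℝ) - Δ = -Δ by ring]
      rw [← integral_add_adjacent_intervals (hgint q₁ (-Δ) 0) (hgint q₁ 0 (1 - Δ)),
        ← integral_add_adjacent_intervals (hgint q₁ 0 v) (hgint q₁ v (1 - Δ))]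
      ring
    have e3 : N q₁ 1 = M + Nn + P := by
      simp only [hM, hNn, hP, hN_def]
      rw [← integral_add_adjacent_intervals (hgint q₁ 0 (1 - Δ)) (hgint q₁ (1 - Δ) 1),
        ← integral_add_adjacent_intervals (hgint q₁ 0 v) (hgint q₁ v (1 - Δ))]
    rw [e1, e2, e3]
    nlinarith
  have hΦ' : ∀ q v : ℝ, Φ q v = N q v / (σ⁻¹ * N q 1) := by
    intro q v
    rw [hΦ, hD, hN_def]
  intro p hp u hu g hg
  have hDpos : ∀ q : ℝ, 0 < σ⁻¹ * N q 1 := fun q =>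
    mul_pos (inv_pos.2 hσ) (hNpos q)
  have hNle : ∀ q w₁ w₂ : ℝ, N q w₁ ≤ N q w₂ → w₁ ≤ w₂ := by
    intro q w₁ w₂ h
    by_contra hcon
    exact absurd h (not_le.2 (hNlt q w₂ w₁ (not_le.1 hcon)))
  -- key two-sided Lipschitz-monotone estimate
  have hkey : ∀ q₁ ∈ Set.Icc (0:ℝ) 1, ∀ q₂ ∈ Set.Icc (0:ℝ) 1, q₁ ≤ q₂ →
      Γ q₁ u ≤ Γ q₂ u ∧ Γ q₂ u ≤ Γ q₁ u + (q₂ - q₁) := by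
    intro q₁ hq₁ q₂ hq₂ hq
    have hv₁ := hΓrange q₁ hq₁ u hu
    have hv₂ := hΓrange q₂ hq₂ u hu
    constructor
    · -- monotone up
      have h1 : Φ q₂ (Γ q₂ u) ≤ Φ q₁ (Γ q₂ u) := by
        rw [hΦ', hΦ', div_le_div_iff₀ (hDpos q₂) (hDpos q₁)]
        have := hcomp1 q₁ q₂ (Γ q₂ u) hq hv₂.1 hv₂.2
        calc N q₂ (Γ q₂ u) * (σ⁻¹ * N q₁ 1) = σ⁻¹ * (N q₂ (Γ q₂ u) * N q₁ 1) := by ring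
          _ ≤ σ⁻¹ * (N q₁ (Γ q₂ u) * N q₂ 1) :=
            mul_le_mul_of_nonneg_left this (le_of_lt (inv_pos.2 hσ))
          _ = N q₁ (Γ q₂ u) * (σ⁻¹ * N q₂ 1) := by ring
      have h2 : Φ q₁ (Γ q₁ u) ≤ Φ q₁ (Γ q₂ u) := by
        calc Φ q₁ (Γ q₁ u) = u := hΓinv q₁ hq₁ u hu
          _ = Φ q₂ (Γ q₂ u) := (hΓinv q₂ hq₂ u hu).symm
          _ ≤ Φ q₁ (Γ q₂ u) := h1
      rw [hΦ', hΦ'] at h2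
      exact hNle q₁ _ _ ((div_le_div_iff_of_pos_right (hDpos q₁)).1 h2)
    · -- Lipschitz up
      rcases le_or_gt (Γ q₁ u + (q₂ - q₁)) 1 with hle | hlt
      · have h1 : Φ q₁ (Γ q₁ u) ≤ Φ q₂ (Γ q₁ u + (q₂ - q₁)) := by
          rw [hΦ', hΦ', div_le_div_iff₀ (hDpos q₁) (hDpos q₂)]
          have := hcomp2 q₁ q₂ (Γ q₁ u) hq hv₁.1 hle
          calc N q₁ (Γ q₁ u) * (σ⁻¹ * N q₂ 1) = σ⁻¹ * (N q₁ (Γ q₁ u) * N q₂ 1) := by ring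
            _ ≤ σ⁻¹ * (N q₂ (Γ q₁ u + (q₂ - q₁)) * N q₁ 1) :=
              mul_le_mul_of_nonneg_left this (le_of_lt (inv_pos.2 hσ))
            _ = N q₂ (Γ q₁ u + (q₂ - q₁)) * (σ⁻¹ * N q₁ 1) := by ring
        have h2 : Φ q₂ (Γ q₂ u) ≤ Φ q₂ (Γ q₁ u + (q₂ - q₁)) := by
          calc Φ q₂ (Γ q₂ u) = u := hΓinv q₂ hq₂ u hu
            _ = Φ q₁ (Γ q₁ u) := (hΓinv q₁ hq₁ u hu).symm
            _ ≤ Φ q₂ (Γ q₁ u + (q₂ - q₁)) := h1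
        rw [hΦ', hΦ'] at h2
        exact hNle q₂ _ _ ((div_le_div_iff_of_pos_right (hDpos q₂)).1 h2)
      · exact le_trans hv₂.2 (le_of_lt hlt)
  -- slope bounds
  have hslope : ∀ x ∈ Set.Icc (0:ℝ) 1, x ≠ p → slope (fun p' => Γ p' u) p x ∈ Set.Icc (0:ℝ) 1 := by
    intro x hx hxp
    rcases lt_or_gt_of_ne hxp with hlt | hgt
    · have h := hkey x hx p hp (le_of_lt hlt)
      have hd : 0 < p - x := by linarith
      rw [slope_def_field]
      constructor
      · rw [show (Γ x u - Γ p u) / (x - p) = (Γ p u - Γ x u) / (p - x) by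
          rw [← neg_div_neg_eq]; congr 1 <;> ring]
        exact div_nonneg (by linarith [h.1]) (le_of_lt hd)
      · rw [show (Γ x u - Γ p u) / (x - p) = (Γ p u - Γ x u) / (p - x) by
          rw [← neg_div_neg_eq]; congr 1 <;> ring]
        rw [div_le_one hd]; linarith [h.2]
    · have h := hkey p hp x hx (le_of_lt hgt)
      have hd : 0 < x - p := by linarith
      rw [slope_def_field]
      exact ⟨div_nonneg (by linarith [h.1]) (le_of_lt hd), by rw [div_le_one hd]; linarith [h.2]⟩
  -- limiting argument
  have htend : Filter.Tendsto (slope (fun p' => Γ p' u) p) (nhdsWithin p {p}ᶜ) (nhds g) :=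
    hasDerivAt_iff_tendsto_slope.1 hg
  rcases lt_or_eq_of_le hp.2 with hp1 | hp1
  · have hne : (nhdsWithin p (Set.Ioc p 1)).NeBot := left_nhdsWithin_Ioc_neBot hp1
    have hsub : Set.Ioc p 1 ⊆ {p}ᶜ := fun x hx => ne_of_gt hx.1
    have ht2 : Filter.Tendsto (slope (fun p' => Γ p' u) p) (nhdsWithin p (Set.Ioc p 1))
        (nhds g) := htend.mono_left (nhdsWithin_mono p hsub)
    refine isClosed_Icc.mem_of_tendsto ht2 ?_
    filter_upwards [self_mem_nhdsWithin] with x hx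
    exact hslope x ⟨le_trans hp.1 (le_of_lt hx.1), hx.2⟩ (ne_of_gt hx.1)
  · have h01 : (0:ℝ) < 1 := one_pos
    have hne : (nhdsWithin p (Set.Ico 0 1)).NeBot := by
      rw [hp1]; exact right_nhdsWithin_Ico_neBot h01
    have hsub : Set.Ico (0:ℝ) 1 ⊆ {p}ᶜ := fun x hx => by
      simp only [Set.mem_compl_iff, Set.mem_singleton_iff]
      rw [hp1]; exact ne_of_lt hx.2
    have ht2 : Filter.Tendsto (slope (fun p' => Γ p' u) p) (nhdsWithin p (Set.Ico 0 1))
        (nhds g) := htend.mono_left (nhdsWithin_mono p hsub)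
    refine isClosed_Icc.mem_of_tendsto ht2 ?_
    filter_upwards [self_mem_nhdsWithin] with x hx
    exact hslope x ⟨hx.1, le_of_lt hx.2⟩ (by rw [hp1]; exact ne_of_lt hx.2)
end

section
/- Monotone contractive coupling: Fix δ > 0, σ ∈ (0, ∞], and p, q ∈ [0,1] with 0 ≤ p - q ≤ δ. Then there exists a coupling of X_p ~ p + ε(σ², p) and X_q ~ q + ε(σ², q) such that almost surely 0 ≤ X_p - X_q ≤ δ. -/
open MeasureTheory
open scoped ENNReal

/-- The law of `X_p = p + ε(σ², p)` for `σ ∈ (0,∞]`; by convention, for `σ = ∞`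
it is the uniform distribution on `[0,1]`. -/
noncomputable def shiftedTruncGaussLaw (σ : ℝ≥0∞) (p : ℝ) : Measure ℝ :=
  if σ = ⊤ then volume.restrict (Set.Icc 0 1)
  else Measure.map (fun x => p + x) (truncGaussLaw σ.toReal p)

namespace MCC

noncomputable def h (s r x : ℝ) : ℝ := Real.exp (-(x - r)^2 / (2*s^2))

lemma h_pos (s r x : ℝ) : 0 < h s r x := Real.exp_pos _

lemma h_cont (s r : ℝ) : Continuous (h s r) := by unfold h; fun_prop

lemma h_intble (s r a b : ℝ) : IntervalIntegrable (h s r) volume a b :=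
  (h_cont s r).intervalIntegrable a b

noncomputable def Fc (s r x : ℝ) : ℝ := ∫ t in (0:ℝ)..(max 0 (min 1 x)), h s r t

noncomputable def Z (s r : ℝ) : ℝ := Fc s r 1

lemma Fc_of_mem (s r : ℝ) {x : ℝ} (h0 : 0 ≤ x) (h1 : x ≤ 1) :
    Fc s r x = ∫ t in (0:ℝ)..x, h s r t := by
  unfold Fc; rw [min_eq_right h1, max_eq_right h0]

lemma Z_eq (s r : ℝ) : Z s r = ∫ t in (0:ℝ)..1, h s r t := by
  unfold Z; rw [Fc_of_mem] <;> norm_num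

lemma integral_h_pos (s r : ℝ) {a b : ℝ} (hab : a < b) :
    0 < ∫ t in a..b, h s r t :=
  intervalIntegral.intervalIntegral_pos_of_pos_on (h_intble s r a b)
    (fun x _ => h_pos s r x) hab

lemma integral_h_nonneg (s r : ℝ) {a b : ℝ} (hab : a ≤ b) :
    0 ≤ ∫ t in a..b, h s r t :=
  intervalIntegral.integral_nonneg hab (fun x _ => (h_pos s r x).le)

lemma Z_pos (s r : ℝ) : 0 < Z s r := by
  rw [Z_eq]; exact integral_h_pos s r one_pos

lemma Fc_nonneg (s r x : ℝ) : 0 ≤ Fc s r x :=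
  integral_h_nonneg s r (le_max_left _ _)

lemma Fc_mono (s r : ℝ) : Monotone (Fc s r) := by
  intro a b hab
  have h1 : max 0 (min 1 a) ≤ max 0 (min 1 b) :=
    max_le_max le_rfl (min_le_min le_rfl hab)
  have key : (∫ t in (0:ℝ)..(max 0 (min 1 a)), h s r t) +
      (∫ t in (max 0 (min 1 a))..(max 0 (min 1 b)), h s r t) =
      ∫ t in (0:ℝ)..(max 0 (min 1 b)), h s r t :=
    intervalIntegral.integral_add_adjacent_intervals (h_intble s r _ _) (h_intble s r _ _)
  have := integral_h_nonneg s r h1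
  unfold Fc
  linarith

lemma Fc_le_Z (s r x : ℝ) : Fc s r x ≤ Z s r := by
  have h1 : max 0 (min 1 x) ≤ 1 := max_le zero_le_one (min_le_left 1 x)
  have key : (∫ t in (0:ℝ)..(max 0 (min 1 x)), h s r t) +
      (∫ t in (max 0 (min 1 x))..(1:ℝ), h s r t) = ∫ t in (0:ℝ)..(1:ℝ), h s r t :=
    intervalIntegral.integral_add_adjacent_intervals (h_intble s r _ _) (h_intble s r _ _)
  have := integral_h_nonneg s r h1
  rw [Z_eq]
  unfold Fc
  linarith

lemma Fc_nonpos (s r : ℝ) {x : ℝ} (hx : x ≤ 0) : Fc s r x = 0 := by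
  unfold Fc
  rw [min_eq_right (hx.trans zero_le_one), max_eq_left hx, intervalIntegral.integral_same]

lemma Fc_ge_one (s r : ℝ) {x : ℝ} (hx : 1 ≤ x) : Fc s r x = Z s r := by
  have h2 : Z s r = Fc s r 1 := rfl
  rw [h2]; unfold Fc; rw [min_eq_left hx, min_self]

lemma Fc_strictMonoOn (s r : ℝ) : StrictMonoOn (Fc s r) (Set.Icc 0 1) := by
  intro a ha b hb hab
  rw [Fc_of_mem s r ha.1 ha.2, Fc_of_mem s r hb.1 hb.2,
    ← intervalIntegral.integral_add_adjacent_intervals (h_intble s r 0 a) (h_intble s r a b)]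
  have := integral_h_pos s r hab
  linarith

lemma Fc_continuous (s r : ℝ) : Continuous (Fc s r) := by
  unfold Fc
  exact (intervalIntegral.continuous_primitive (fun a b => h_intble s r a b) 0).comp
    (continuous_const.max (continuous_const.min continuous_id))

lemma mlr (s p q y z : ℝ) (hs : 0 < s) (hqp : q ≤ p) (hyz : y ≤ z) :
    h s p y * h s q z ≤ h s q y * h s p z := by
  unfold h
  rw [← Real.exp_add, ← Real.exp_add, Real.exp_le_exp, ← add_div, ← add_div,
    div_le_div_iff_of_pos_right (by positivity)]
  nlinarith [mul_nonneg (sub_nonneg.2 hyz) (sub_nonneg.2 hqp)]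

lemma core (s p q : ℝ) (hs : 0 < s) (hqp : q ≤ p) {x : ℝ} (hx0 : 0 ≤ x) (hx1 : x ≤ 1) :
    (∫ t in (0:ℝ)..x, h s p t) * (∫ t in x..1, h s q t) ≤
    (∫ t in (0:ℝ)..x, h s q t) * (∫ t in x..1, h s p t) := by
  have step1 : ∀ z, x ≤ z → (∫ t in (0:ℝ)..x, h s p t) * h s q z ≤
      (∫ t in (0:ℝ)..x, h s q t) * h s p z := by
    intro z hz
    rw [← intervalIntegral.integral_mul_const, ← intervalIntegral.integral_mul_const]
    exact intervalIntegral.integral_mono_on hx0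
      (((h_cont s p).mul continuous_const).intervalIntegrable _ _)
      (((h_cont s q).mul continuous_const).intervalIntegrable _ _)
      (fun y hy => mlr s p q y z hs hqp (hy.2.trans hz))
  calc (∫ t in (0:ℝ)..x, h s p t) * (∫ t in x..1, h s q t)
      = ∫ z in x..1, (∫ t in (0:ℝ)..x, h s p t) * h s q z := by
        rw [intervalIntegral.integral_const_mul]
    _ ≤ ∫ z in x..1, (∫ t in (0:ℝ)..x, h s q t) * h s p z := by
        refine intervalIntegral.integral_mono_on hx1
          (continuous_const.mul (h_cont s q) |>.intervalIntegrable _ _)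
          (continuous_const.mul (h_cont s p) |>.intervalIntegrable _ _)
          (fun z hz => step1 z hz.1)
    _ = (∫ t in (0:ℝ)..x, h s q t) * (∫ t in x..1, h s p t) := by
        rw [intervalIntegral.integral_const_mul]

lemma I1 (s p q : ℝ) (hs : 0 < s) (hqp : q ≤ p) (x : ℝ) :
    Fc s p x * Z s q ≤ Fc s q x * Z s p := by
  set m := max 0 (min 1 x) with hm
  have hm0 : 0 ≤ m := le_max_left _ _
  have hm1 : m ≤ 1 := max_le zero_le_one (min_le_left 1 x)
  have hfp : Fc s p x = ∫ t in (0:ℝ)..m, h s p t := rfl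
  have hfq : Fc s q x = ∫ t in (0:ℝ)..m, h s q t := rfl
  have hzp : (∫ t in (0:ℝ)..m, h s p t) + (∫ t in m..1, h s p t) = Z s p := by
    rw [Z_eq]
    exact intervalIntegral.integral_add_adjacent_intervals (h_intble s p _ _) (h_intble s p _ _)
  have hzq : (∫ t in (0:ℝ)..m, h s q t) + (∫ t in m..1, h s q t) = Z s q := by
    rw [Z_eq]
    exact intervalIntegral.integral_add_adjacent_intervals (h_intble s q _ _) (h_intble s q _ _)
  have hc := core s p q hs hqp hm0 hm1
  rw [hfp, hfq, ← hzp, ← hzq]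
  nlinarith [hc]

lemma I2 (s p q : ℝ) (hs : 0 < s) (hqp : q ≤ p)
    {x : ℝ} (hx0 : 0 ≤ x) (hx1 : x ≤ 1) :
    Fc s q (x - (p - q)) * Z s p ≤ Fc s p x * Z s q := by
  set c := p - q with hc
  have hc0 : 0 ≤ c := sub_nonneg.2 hqp
  have hid : ∀ a b : ℝ, (∫ t in a..b, h s q t) = ∫ t in (a+c)..(b+c), h s p t := by
    intro a b
    rw [← intervalIntegral.integral_comp_add_right (fun t => h s p t) c]
    congr 1; funext t; unfold h; rw [hc]; ring_nf
  rcases lt_or_ge x c with hxc | hxc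
  · rw [Fc_nonpos s q (by linarith), zero_mul]
    exact mul_nonneg (Fc_nonneg s p x) (Z_pos s q).le
  · have e1 : Fc s q (x - c) = ∫ t in c..x, h s p t := by
      rw [Fc_of_mem s q (by linarith) (by linarith), hid, zero_add, sub_add_cancel]
    have e2 : Z s q = ∫ t in c..(1+c), h s p t := by
      rw [Z_eq, hid, zero_add]
    have e3 : Fc s p x = (∫ t in (0:ℝ)..c, h s p t) + ∫ t in c..x, h s p t := by
      rw [Fc_of_mem s p hx0 hx1,
        ← intervalIntegral.integral_add_adjacent_intervals (h_intble s p 0 c) (h_intble s p c x)]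
    have e4 : Z s p = ((∫ t in (0:ℝ)..c, h s p t) + ∫ t in c..x, h s p t)
        + ∫ t in x..1, h s p t := by
      rw [Z_eq,
        ← intervalIntegral.integral_add_adjacent_intervals (h_intble s p 0 x) (h_intble s p x 1),
        ← intervalIntegral.integral_add_adjacent_intervals (h_intble s p 0 c) (h_intble s p c x)]
    have e5 : (∫ t in c..(1+c), h s p t) = ((∫ t in c..x, h s p t) + ∫ t in x..1, h s p t)
        + ∫ t in (1:ℝ)..(1+c), h s p t := by
      rw [← intervalIntegral.integral_add_adjacent_intervals (h_intble s p c 1)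
          (h_intble s p 1 (1+c)),
        ← intervalIntegral.integral_add_adjacent_intervals (h_intble s p c x) (h_intble s p x 1)]
    rw [e1, e2, e3, e4, e5]
    have nA := integral_h_nonneg s p hc0
    have nB := integral_h_nonneg s p hxc
    have nC := integral_h_nonneg s p hx1
    have nD := integral_h_nonneg s p (le_add_of_nonneg_right hc0 : (1:ℝ) ≤ 1 + c)
    nlinarith [mul_nonneg nA nC, mul_nonneg nA nD, mul_nonneg nB nD]

lemma icc_to_interval (s r : ℝ) {m : ℝ} (hm : -r ≤ m) :
    ∫ y in Set.Icc (-r) m, Real.exp (-y^2/(2*s^2)) = ∫ t in (0:ℝ)..(m+r), h s r t := by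
  have : (0:ℝ) = -r + r := by ring
  rw [this, ← intervalIntegral.integral_comp_add_right (h s r) r]
  rw [MeasureTheory.integral_Icc_eq_integral_Ioc, ← intervalIntegral.integral_of_le hm]
  congr 1; funext t; unfold h; ring_nf

lemma K_eq_Z (s r : ℝ) :
    (∫ y in Set.Icc (-r) (1-r), Real.exp (-y^2/(2*s^2))) = Z s r := by
  rw [icc_to_interval s r (by linarith : -r ≤ 1-r), Z_eq]
  norm_num

/-- CDF of the shifted law -/
lemma nu_Iic (s r x : ℝ) :
    (Measure.map (fun y => r + y) (truncGaussLaw s r)) (Set.Iic x)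
      = ENNReal.ofReal (Fc s r x / Z s r) := by
  rw [Measure.map_apply (measurable_const_add r) measurableSet_Iic]
  have hpre : (fun y => r + y) ⁻¹' Set.Iic x = Set.Iic (x - r) := by
    ext y; simp [le_sub_iff_add_le, add_comm]
  rw [hpre]
  unfold truncGaussLaw
  rw [withDensity_apply _ measurableSet_Iic, Measure.restrict_restrict measurableSet_Iic]
  have hset : Set.Iic (x - r) ∩ Set.Icc (-r) (1-r) = Set.Icc (-r) (min (1-r) (x-r)) := by
    ext y
    simp only [Set.mem_inter_iff, Set.mem_Iic, Set.mem_Icc, le_min_iff]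
    tauto
  rw [hset, K_eq_Z]
  have hint : IntegrableOn (fun y => Real.exp (-y^2/(2*s^2)) / Z s r)
      (Set.Icc (-r) (min (1-r) (x-r))) volume :=
    (Continuous.integrableOn_Icc (by fun_prop))
  rw [← MeasureTheory.ofReal_integral_eq_lintegral_ofReal hint
    (Filter.Eventually.of_forall fun y => div_nonneg (Real.exp_pos _).le (Z_pos s r).le)]
  congr 1
  rw [MeasureTheory.integral_div]
  congr 1
  rcases le_or_gt 0 x with hx | hx
  · have hm : -r ≤ min (1-r) (x-r) := le_min (by linarith) (by linarith)
    rw [icc_to_interval s r hm]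
    have : min (1-r) (x-r) + r = min 1 x := by
      rcases min_cases (1-r) (x-r) with ⟨e, _⟩ | ⟨e, _⟩ <;> rw [e] <;>
        [rw [min_eq_left (by linarith)]; rw [min_eq_right (by linarith)]] <;> ring
    rw [this]
    unfold Fc
    rw [max_eq_right (le_min zero_le_one hx)]
  · have hmlt : min (1-r) (x-r) < -r := (min_le_right _ _).trans_lt (by linarith)
    rw [Set.Icc_eq_empty (not_le.2 hmlt), MeasureTheory.setIntegral_empty]
    rw [Fc_nonpos s r hx.le]

lemma nu_univ (s r : ℝ) :
    (Measure.map (fun y => r + y) (truncGaussLaw s r)) Set.univ = 1 := by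
  rw [Measure.map_apply (measurable_const_add r) MeasurableSet.univ, Set.preimage_univ]
  unfold truncGaussLaw
  rw [withDensity_apply _ MeasurableSet.univ, Measure.restrict_univ, K_eq_Z]
  have hint : IntegrableOn (fun y => Real.exp (-y^2/(2*s^2)) / Z s r)
      (Set.Icc (-r) (1-r)) volume :=
    (Continuous.integrableOn_Icc (by fun_prop))
  rw [← MeasureTheory.ofReal_integral_eq_lintegral_ofReal hint
    (Filter.Eventually.of_forall fun y => div_nonneg (Real.exp_pos _).le (Z_pos s r).le)]
  rw [MeasureTheory.integral_div, K_eq_Z, div_self (Z_pos s r).ne', ENNReal.ofReal_one]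

lemma nu_prob (s r : ℝ) :
    IsProbabilityMeasure (Measure.map (fun y => r + y) (truncGaussLaw s r)) :=
  ⟨nu_univ s r⟩

end MCC

/-- monotone contractive coupling: Fix `δ > 0`, `σ ∈ (0,∞]`, and
`p, q ∈ [0,1]` with `0 ≤ p - q ≤ δ`. Then there is a coupling of
`X_p ~ p + ε(σ², p)` and `X_q ~ q + ε(σ², q)` with `0 ≤ X_p - X_q ≤ δ` a.s. -/
theorem monotone_contractive_coupling
    (δ : ℝ) (hδ : 0 < δ) (σ : ℝ≥0∞) (hσ : 0 < σ)
    (p q : ℝ) (hp : p ∈ Set.Icc (0:ℝ) 1) (hq : q ∈ Set.Icc (0:ℝ) 1)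
    (hpq : 0 ≤ p - q) (hpq' : p - q ≤ δ) :
    ∃ μ : Measure (ℝ × ℝ), IsProbabilityMeasure μ ∧
      μ.map Prod.fst = shiftedTruncGaussLaw σ p ∧
      μ.map Prod.snd = shiftedTruncGaussLaw σ q ∧
      ∀ᵐ z ∂μ, 0 ≤ z.1 - z.2 ∧ z.1 - z.2 ≤ δ := by
  have hA : MeasurableSet {z : ℝ × ℝ | 0 ≤ z.1 - z.2 ∧ z.1 - z.2 ≤ δ} := by
    have : {z : ℝ × ℝ | 0 ≤ z.1 - z.2 ∧ z.1 - z.2 ≤ δ}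
        = (fun z : ℝ × ℝ => z.1 - z.2) ⁻¹' Set.Icc 0 δ := by
      ext z; simp [Set.mem_Icc]
    rw [this]
    exact (measurable_fst.sub measurable_snd) measurableSet_Icc
  rcases eq_or_ne σ ⊤ with hσtop | hσtop
  · -- uniform case: diagonal coupling
    subst hσtop
    set base := volume.restrict (Set.Icc (0:ℝ) 1) with hbase
    haveI hbprob : IsProbabilityMeasure base := ⟨by simp [hbase, Real.volume_Icc]⟩
    have hdiag : Measurable (fun x : ℝ => (x, x)) := measurable_id.prodMk measurable_id
    refine ⟨Measure.map (fun x => (x, x)) base, ?_, ?_, ?_, ?_⟩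
    · exact Measure.isProbabilityMeasure_map hdiag.aemeasurable
    · rw [Measure.map_map measurable_fst hdiag]
      have : (Prod.fst ∘ fun x : ℝ => (x, x)) = id := rfl
      rw [this, Measure.map_id]
      simp [shiftedTruncGaussLaw, hbase]
    · rw [Measure.map_map measurable_snd hdiag]
      have : (Prod.snd ∘ fun x : ℝ => (x, x)) = id := rfl
      rw [this, Measure.map_id]
      simp [shiftedTruncGaussLaw, hbase]
    · rw [MeasureTheory.ae_map_iff hdiag.aemeasurable hA]
      exact Filter.Eventually.of_forall fun x => ⟨by simp, by simp [hδ.le]⟩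
  · -- finite σ case
    have hs : 0 < σ.toReal := ENNReal.toReal_pos hσ.ne' hσtop
    set s := σ.toReal with hsdef
    haveI hνp : IsProbabilityMeasure (Measure.map (fun y => p + y) (truncGaussLaw s p)) :=
      MCC.nu_prob s p
    haveI hνq : IsProbabilityMeasure (Measure.map (fun y => q + y) (truncGaussLaw s q)) :=
      MCC.nu_prob s q
    set νp := Measure.map (fun y => p + y) (truncGaussLaw s p) with hνpdef
    set νq := Measure.map (fun y => q + y) (truncGaussLaw s q) with hνqdef
    have hshift_p : shiftedTruncGaussLaw σ p = νp := by rw [shiftedTruncGaussLaw, if_neg hσtop]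
    have hshift_q : shiftedTruncGaussLaw σ q = νq := by rw [shiftedTruncGaussLaw, if_neg hσtop]
    have hqp : q ≤ p := by linarith
    have hZp := MCC.Z_pos s p
    have hZq := MCC.Z_pos s q
    -- construct the monotone rearrangement T
    have hex : ∀ x : ℝ, ∃ y, y ∈ Set.Icc (0:ℝ) 1 ∧
        MCC.Fc s q y = MCC.Fc s p x * MCC.Z s q / MCC.Z s p := by
      intro x
      have h1 : MCC.Fc s p x * MCC.Z s q / MCC.Z s p ∈
          Set.Icc (MCC.Fc s q 0) (MCC.Fc s q 1) := by
        rw [MCC.Fc_nonpos s q le_rfl]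
        refine ⟨div_nonneg (mul_nonneg (MCC.Fc_nonneg s p x) hZq.le) hZp.le, ?_⟩
        have h2 : MCC.Fc s q 1 = MCC.Z s q := rfl
        rw [h2, div_le_iff₀ hZp]
        nlinarith [MCC.Fc_le_Z s p x]
      obtain ⟨y, hy, hyv⟩ :=
        intermediate_value_Icc zero_le_one (MCC.Fc_continuous s q).continuousOn h1
      exact ⟨y, hy, hyv⟩
    choose T hT1 hT2 using hex
    have hTmono : Monotone T := by
      intro a b hab
      have h1 : MCC.Fc s q (T a) ≤ MCC.Fc s q (T b) := by
        rw [hT2 a, hT2 b]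
        have := MCC.Fc_mono s p hab
        gcongr
      exact ((MCC.Fc_strictMonoOn s q).le_iff_le (hT1 a) (hT1 b)).1 h1
    have hTmeas : Measurable T := hTmono.measurable
    have hTle : ∀ x ∈ Set.Icc (0:ℝ) 1, T x ≤ x := by
      intro x hx
      have h1 : MCC.Fc s q (T x) ≤ MCC.Fc s q x := by
        rw [hT2 x, div_le_iff₀ hZp]
        exact MCC.I1 s p q hs hqp x
      exact ((MCC.Fc_strictMonoOn s q).le_iff_le (hT1 x) hx).1 h1
    have hTge : ∀ x ∈ Set.Icc (0:ℝ) 1, x - (p - q) ≤ T x := by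
      intro x hx
      rcases le_or_gt x (p - q) with hxc | hxc
      · linarith [(hT1 x).1]
      · have hmem : x - (p - q) ∈ Set.Icc (0:ℝ) 1 := ⟨by linarith, by linarith [hx.2]⟩
        have h1 : MCC.Fc s q (x - (p - q)) ≤ MCC.Fc s q (T x) := by
          rw [hT2 x, le_div_iff₀ hZp]
          exact MCC.I2 s p q hs hqp hx.1 hx.2
        exact ((MCC.Fc_strictMonoOn s q).le_iff_le hmem (hT1 x)).1 h1
    -- the transported measure equals νq
    have hmapT : Measure.map T νp = νq := by
      haveI : IsProbabilityMeasure (Measure.map T νp) :=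
        Measure.isProbabilityMeasure_map hTmeas.aemeasurable
      refine Measure.ext_of_Iic (Measure.map T νp) νq (fun y => ?_)
      rw [Measure.map_apply hTmeas measurableSet_Iic, hνqdef, MCC.nu_Iic]
      rcases lt_or_ge y 0 with hy | hy
      · have hpre : T ⁻¹' Set.Iic y = ∅ := by
          ext x
          simp only [Set.mem_preimage, Set.mem_Iic, Set.mem_empty_iff_false, iff_false, not_le]
          exact hy.trans_le (hT1 x).1
        rw [hpre, measure_empty, MCC.Fc_nonpos s q hy.le, zero_div, ENNReal.ofReal_zero]
      rcases le_or_gt 1 y with hy1 | hy1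
      · have hpre : T ⁻¹' Set.Iic y = Set.univ := by
          ext x
          simp only [Set.mem_preimage, Set.mem_Iic, Set.mem_univ, iff_true]
          exact (hT1 x).2.trans hy1
        rw [hpre, MCC.Fc_ge_one s q hy1, div_self hZq.ne', ENNReal.ofReal_one]
        exact measure_univ
      · -- main case y ∈ [0,1)
        have hKq0 : 0 ≤ MCC.Fc s q y * MCC.Z s p / MCC.Z s q :=
          div_nonneg (mul_nonneg (MCC.Fc_nonneg s q y) hZp.le) hZq.le
        have hFqy : MCC.Fc s q y < MCC.Z s q := by
          have h2 : MCC.Fc s q 1 = MCC.Z s q := rfl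
          have := MCC.Fc_strictMonoOn s q ⟨hy, hy1.le⟩ ⟨zero_le_one, le_rfl⟩ hy1
          rw [h2] at this
          exact this
        have hKqlt : MCC.Fc s q y * MCC.Z s p / MCC.Z s q < MCC.Z s p := by
          rw [div_lt_iff₀ hZq]
          nlinarith
        obtain ⟨b, hb, hbv⟩ : ∃ b ∈ Set.Icc (0:ℝ) 1,
            MCC.Fc s p b = MCC.Fc s q y * MCC.Z s p / MCC.Z s q := by
          have h1 : MCC.Fc s q y * MCC.Z s p / MCC.Z s q ∈
              Set.Icc (MCC.Fc s p 0) (MCC.Fc s p 1) := by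
            rw [MCC.Fc_nonpos s p le_rfl]
            have h2 : MCC.Fc s p 1 = MCC.Z s p := rfl
            exact ⟨hKq0, by rw [h2]; exact hKqlt.le⟩
          obtain ⟨b, hbmem, hbv⟩ :=
            intermediate_value_Icc zero_le_one (MCC.Fc_continuous s p).continuousOn h1
          exact ⟨b, hbmem, hbv⟩
        have hpre : T ⁻¹' Set.Iic y = Set.Iic b := by
          ext x
          simp only [Set.mem_preimage, Set.mem_Iic]
          constructor
          · intro hxy
            have h1 : MCC.Fc s q (T x) ≤ MCC.Fc s q y := MCC.Fc_mono s q hxy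
            rw [hT2 x, div_le_iff₀ hZp] at h1
            have h2 : MCC.Fc s p x ≤ MCC.Fc s p b := by
              rw [hbv, le_div_iff₀ hZq]; exact h1
            by_contra hbx
            push_neg at hbx
            rcases le_or_gt x 1 with hx1 | hx1
            · have := MCC.Fc_strictMonoOn s p hb ⟨hb.1.trans hbx.le, hx1⟩ hbx
              linarith
            · have hfx : MCC.Fc s p x = MCC.Z s p := MCC.Fc_ge_one s p hx1.le
              rw [hfx, hbv] at h2
              linarith
          · intro hxb
            have h2 : MCC.Fc s p x ≤ MCC.Fc s p b := MCC.Fc_mono s p hxb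
            rw [hbv, le_div_iff₀ hZq] at h2
            have h1 : MCC.Fc s q (T x) ≤ MCC.Fc s q y := by
              rw [hT2 x, div_le_iff₀ hZp]
              exact h2
            exact ((MCC.Fc_strictMonoOn s q).le_iff_le (hT1 x) ⟨hy, hy1.le⟩).1 h1
        rw [hpre, hνpdef, MCC.nu_Iic]
        congr 1
        rw [hbv]
        field_simp
    -- assemble
    have hpair : Measurable (fun x : ℝ => (x, T x)) := measurable_id.prodMk hTmeas
    refine ⟨Measure.map (fun x => (x, T x)) νp, ?_, ?_, ?_, ?_⟩
    · exact Measure.isProbabilityMeasure_map hpair.aemeasurable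
    · rw [Measure.map_map measurable_fst hpair, hshift_p]
      have : (Prod.fst ∘ fun x : ℝ => (x, T x)) = id := rfl
      rw [this, Measure.map_id]
    · rw [Measure.map_map measurable_snd hpair, hshift_q]
      have : (Prod.snd ∘ fun x : ℝ => (x, T x)) = T := rfl
      rw [this, hmapT]
    · rw [MeasureTheory.ae_map_iff hpair.aemeasurable hA]
      have hsupp : ∀ᵐ x ∂νp, x ∈ Set.Icc (0:ℝ) 1 := by
        rw [MeasureTheory.ae_iff]
        have hcompl : {x : ℝ | ¬ x ∈ Set.Icc (0:ℝ) 1} = Set.Iio 0 ∪ Set.Ioi 1 := by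
          ext x
          simp only [Set.mem_setOf_eq, Set.mem_Icc, not_and_or, not_le, Set.mem_union,
            Set.mem_Iio, Set.mem_Ioi]
        rw [hcompl]
        refine measure_union_null ?_ ?_
        · have h0 : νp (Set.Iic 0) = 0 := by
            rw [hνpdef, MCC.nu_Iic, MCC.Fc_nonpos s p le_rfl, zero_div, ENNReal.ofReal_zero]
          exact le_antisymm (h0 ▸ measure_mono Set.Iio_subset_Iic_self) (zero_le)
        · have h1 : νp (Set.Iic 1) = 1 := by
            rw [hνpdef, MCC.nu_Iic, MCC.Fc_ge_one s p le_rfl, div_self hZp.ne',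
              ENNReal.ofReal_one]
          have hcIic : Set.Ioi (1:ℝ) = (Set.Iic 1)ᶜ := (Set.compl_Iic).symm
          rw [hcIic, measure_compl measurableSet_Iic (measure_ne_top _ _), h1, measure_univ,
            tsub_self]
      filter_upwards [hsupp] with x hx
      refine ⟨by simpa using hTle x hx, ?_⟩
      have := hTge x hx
      show x - T x ≤ δ
      linarith
end

section
/- One-step clustering contraction: Let p' be one step of the Gibbs sampler from p ∈ [0,1]^d (choose i uniformly in [d], replace p_i by (D^{-1}Cp)_i + ε_i where ε_i is a truncated normal with variance 1/(2A²c_i) conditioned to keep the coordinate in [0,1]). Then E[⟨p', Δp'⟩] ≤ (1 - λ/d) E[⟨p, Δp⟩] + 5/(2A²). -/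
open MeasureTheory
open scoped ENNReal NNReal

/-- One step of the Gibbs sampler for `π_{A,C}`: choose a coordinate `i`
uniformly at random and replace `p i` by `(D⁻¹Cp)_i + ε_i`, where `ε_i` is a
centered normal with variance `1/(2A²c_i)` conditioned to keep the coordinate
in `[0,1]`. -/
noncomputable def gibbsStep (d : ℕ) (C : Fin d → Fin d → ℝ) (c : Fin d → ℝ)
    (A : ℝ) (p : Fin d → ℝ) : Measure (Fin d → ℝ) :=
  (d : ℝ≥0∞)⁻¹ • ∑ i : Fin d,
    Measure.map
      (fun x => Function.update p i ((∑ j, C i j * p j) / c i + x))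
      (truncGaussLaw (Real.sqrt (1 / (2 * A ^ 2 * c i)))
        ((∑ j, C i j * p j) / c i))

section Helpers

private lemma sum_update_fun {d : ℕ} (g : Fin d → ℝ → ℝ) (p : Fin d → ℝ) (i : Fin d) (t : ℝ) :
    ∑ k, g k (Function.update p i t k) = ∑ k, g k (p k) + (g i t - g i (p i)) := by
  have h1 : (fun k => g k (Function.update p i t k))
      = Function.update (fun k => g k (p k)) i (g i t) := by
    funext k
    rcases eq_or_ne k i with rfl | h
    · simp
    · simp [Function.update_of_ne h]
  rw [h1, Finset.sum_update_of_mem (Finset.mem_univ i),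
    Finset.sum_eq_sum_sdiff_singleton_add (Finset.mem_univ i) (fun k => g k (p k))]
  ring

private lemma key_alg {d : ℕ} (C : Fin d → Fin d → ℝ) (hsym : ∀ i j, C i j = C j i)
    (hdiag : ∀ i, C i i = 0) (c : Fin d → ℝ) (hc0 : ∀ i, c i ≠ 0)
    (p : Fin d → ℝ) (i : Fin d) (t : ℝ) :
    ∑ k, c k * Function.update p i t k *
        (Function.update p i t k - (∑ j, C k j * Function.update p i t j) / c k)
      = (∑ k, c k * p k * (p k - (∑ j, C k j * p j) / c k))
        + c i * (t ^ 2 - p i ^ 2) - 2 * (t - p i) * (∑ j, C i j * p j) := by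
  have reform : ∀ q : Fin d → ℝ,
      ∑ k, c k * q k * (q k - (∑ j, C k j * q j) / c k)
        = ∑ k, (c k * q k ^ 2 - q k * ∑ j, C k j * q j) := by
    intro q
    refine Finset.sum_congr rfl fun k _ => ?_
    field_simp [hc0 k]
  have hS : ∀ k, (∑ j, C k j * Function.update p i t j)
      = (∑ j, C k j * p j) + (C k i * t - C k i * p i) := by
    intro k
    simpa using sum_update_fun (fun j x => C k j * x) p i t
  rw [reform (Function.update p i t), reform p]
  have e1 : ∑ k, (c k * Function.update p i t k ^ 2
        - Function.update p i t k * ∑ j, C k j * Function.update p i t j)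
      = ∑ k, (c k * Function.update p i t k ^ 2
        - Function.update p i t k * ((∑ j, C k j * p j) + (C k i * t - C k i * p i))) := by
    refine Finset.sum_congr rfl fun k _ => ?_
    rw [hS k]
  rw [e1]
  have e2 := sum_update_fun
    (fun k x => c k * x ^ 2 - x * ((∑ j, C k j * p j) + (C k i * t - C k i * p i))) p i t
  rw [e2]
  have e3 : ∑ k, (c k * p k ^ 2 - p k * ((∑ j, C k j * p j) + (C k i * t - C k i * p i)))
      = (∑ k, (c k * p k ^ 2 - p k * ∑ j, C k j * p j))
        - (t - p i) * ∑ k, C k i * p k := by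
    have : ∀ k, c k * p k ^ 2 - p k * ((∑ j, C k j * p j) + (C k i * t - C k i * p i))
        = (c k * p k ^ 2 - p k * ∑ j, C k j * p j) - (t - p i) * (C k i * p k) := by
      intro k; ring
    simp_rw [this]
    rw [Finset.sum_sub_distrib, ← Finset.mul_sum]
  rw [e3]
  have e4 : ∑ k, C k i * p k = ∑ j, C i j * p j :=
    Finset.sum_congr rfl fun k _ => by rw [hsym]
  rw [e4, hdiag i]
  ring

private lemma weight_integral_pos (σ m : ℝ) :
    0 < ∫ y in Set.Icc (-m) (1 - m), Real.exp (-y ^ 2 / (2 * σ ^ 2)) := by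
  have hab : (-m : ℝ) ≤ 1 - m := by linarith
  rw [MeasureTheory.integral_Icc_eq_integral_Ioc, ← intervalIntegral.integral_of_le hab]
  refine intervalIntegral.intervalIntegral_pos_of_pos_on ?_ (fun x _ => Real.exp_pos _)
    (by linarith)
  exact (by fun_prop : Continuous fun y : ℝ => Real.exp (-y ^ 2 / (2 * σ ^ 2))).intervalIntegrable _ _

private lemma sq_weight_integral_le (σ m : ℝ) (hσ : 0 < σ) (hm0 : 0 ≤ m) (hm1 : m ≤ 1) :
    ∫ x in Set.Icc (-m) (1 - m), x ^ 2 * Real.exp (-x ^ 2 / (2 * σ ^ 2))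
      ≤ σ ^ 2 * ∫ x in Set.Icc (-m) (1 - m), Real.exp (-x ^ 2 / (2 * σ ^ 2)) := by
  have hσ2 : (0:ℝ) < σ ^ 2 := by positivity
  set a : ℝ := -m with ha
  set b : ℝ := 1 - m with hb
  have hab : a ≤ b := by rw [ha, hb]; linarith
  have ha0 : a ≤ 0 := by rw [ha]; linarith
  have hb0 : 0 ≤ b := by rw [hb]; linarith
  have hφ : Continuous fun x : ℝ => Real.exp (-x ^ 2 / (2 * σ ^ 2)) := by fun_prop
  have hx2φ : Continuous fun x : ℝ => x ^ 2 * Real.exp (-x ^ 2 / (2 * σ ^ 2)) := by fun_prop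
  have hsubφ : Continuous fun x : ℝ => (x ^ 2 - σ ^ 2) * Real.exp (-x ^ 2 / (2 * σ ^ 2)) := by
    fun_prop
  have key : ∫ x in a..b, (x ^ 2 - σ ^ 2) * Real.exp (-x ^ 2 / (2 * σ ^ 2))
      = (-σ ^ 2 * b * Real.exp (-b ^ 2 / (2 * σ ^ 2)))
        - (-σ ^ 2 * a * Real.exp (-a ^ 2 / (2 * σ ^ 2))) := by
    refine intervalIntegral.integral_eq_sub_of_hasDerivAt
      (f := fun y => -σ ^ 2 * y * Real.exp (-y ^ 2 / (2 * σ ^ 2))) (fun x _ => ?_)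
      (hsubφ.intervalIntegrable _ _)
    have h1 : HasDerivAt (fun x : ℝ => -x ^ 2 / (2 * σ ^ 2)) (-(2 * x ^ 1) / (2 * σ ^ 2)) x :=
      ((hasDerivAt_pow 2 x).neg).div_const _
    have h2 := h1.exp
    have h4 : HasDerivAt (fun y => -σ ^ 2 * y * Real.exp (-y ^ 2 / (2 * σ ^ 2))) _ x :=
      ((hasDerivAt_id x).const_mul (-σ ^ 2)).mul h2
    refine h4.congr_deriv ?_
    have hσne : σ ≠ 0 := hσ.ne'
    simp only [id]
    field_simp
    ring
  have hnegb : -σ ^ 2 * b * Real.exp (-b ^ 2 / (2 * σ ^ 2)) ≤ 0 := by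
    nlinarith [mul_nonneg (mul_nonneg hσ2.le hb0) (Real.exp_pos (-b ^ 2 / (2 * σ ^ 2))).le]
  have hnega : 0 ≤ -σ ^ 2 * a * Real.exp (-a ^ 2 / (2 * σ ^ 2)) := by
    nlinarith [mul_nonneg (mul_nonneg hσ2.le (neg_nonneg.mpr ha0))
      (Real.exp_pos (-a ^ 2 / (2 * σ ^ 2))).le]
  have hle : ∫ x in a..b, (x ^ 2 - σ ^ 2) * Real.exp (-x ^ 2 / (2 * σ ^ 2)) ≤ 0 := by
    rw [key]; linarith
  have hsplit : ∫ x in a..b, (x ^ 2 - σ ^ 2) * Real.exp (-x ^ 2 / (2 * σ ^ 2))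
      = (∫ x in a..b, x ^ 2 * Real.exp (-x ^ 2 / (2 * σ ^ 2)))
        - σ ^ 2 * ∫ x in a..b, Real.exp (-x ^ 2 / (2 * σ ^ 2)) := by
    rw [← intervalIntegral.integral_const_mul, ← intervalIntegral.integral_sub
      (hx2φ.intervalIntegrable _ _) ((hφ.intervalIntegrable _ _).const_mul _)]
    congr 1
    funext x
    ring
  rw [MeasureTheory.integral_Icc_eq_integral_Ioc, ← intervalIntegral.integral_of_le hab,
    MeasureTheory.integral_Icc_eq_integral_Ioc, ← intervalIntegral.integral_of_le hab]
  linarith [hsplit ▸ hle]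

private lemma truncGauss_eq (σ m : ℝ) :
    truncGaussLaw σ m = (volume.restrict (Set.Icc (-m) (1 - m))).withDensity
      (fun x => (((Real.exp (-x ^ 2 / (2 * σ ^ 2)) /
        ∫ y in Set.Icc (-m) (1 - m), Real.exp (-y ^ 2 / (2 * σ ^ 2))).toNNReal : ℝ≥0) : ℝ≥0∞)) :=
  rfl

private lemma truncGauss_integrable (σ m : ℝ) (G : ℝ → ℝ) (hG : Continuous G) :
    Integrable G (truncGaussLaw σ m) := by
  rw [truncGauss_eq]
  have hhc : Continuous fun x : ℝ => Real.exp (-x ^ 2 / (2 * σ ^ 2)) /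
      ∫ y in Set.Icc (-m) (1 - m), Real.exp (-y ^ 2 / (2 * σ ^ 2)) := by fun_prop
  rw [integrable_withDensity_iff_integrable_smul hhc.measurable.real_toNNReal]
  have e : (fun x => ((Real.exp (-x ^ 2 / (2 * σ ^ 2)) /
        ∫ y in Set.Icc (-m) (1 - m), Real.exp (-y ^ 2 / (2 * σ ^ 2))).toNNReal : ℝ≥0) • G x)
      = fun x => ((Real.exp (-x ^ 2 / (2 * σ ^ 2)) /
        ∫ y in Set.Icc (-m) (1 - m), Real.exp (-y ^ 2 / (2 * σ ^ 2))) ⊔ 0) * G x := by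
    funext x
    rw [NNReal.smul_def, smul_eq_mul, Real.coe_toNNReal']
  rw [e]
  exact ((hhc.max continuous_const).mul hG).integrableOn_Icc

private lemma truncGauss_integral (σ m : ℝ) (G : ℝ → ℝ) (hG : Continuous G)
    (hZ : 0 < ∫ y in Set.Icc (-m) (1 - m), Real.exp (-y ^ 2 / (2 * σ ^ 2))) :
    ∫ x, G x ∂(truncGaussLaw σ m)
      = (∫ x in Set.Icc (-m) (1 - m), G x * Real.exp (-x ^ 2 / (2 * σ ^ 2)))
        / ∫ y in Set.Icc (-m) (1 - m), Real.exp (-y ^ 2 / (2 * σ ^ 2)) := by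
  rw [truncGauss_eq]
  have hhc : Continuous fun x : ℝ => Real.exp (-x ^ 2 / (2 * σ ^ 2)) /
      ∫ y in Set.Icc (-m) (1 - m), Real.exp (-y ^ 2 / (2 * σ ^ 2)) := by fun_prop
  rw [integral_withDensity_eq_integral_smul hhc.measurable.real_toNNReal]
  have e : ∀ x : ℝ, ((Real.exp (-x ^ 2 / (2 * σ ^ 2)) /
        ∫ y in Set.Icc (-m) (1 - m), Real.exp (-y ^ 2 / (2 * σ ^ 2))).toNNReal : ℝ≥0) • G x
      = (G x * Real.exp (-x ^ 2 / (2 * σ ^ 2)))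
        / ∫ y in Set.Icc (-m) (1 - m), Real.exp (-y ^ 2 / (2 * σ ^ 2)) := by
    intro x
    rw [NNReal.smul_def, smul_eq_mul, Real.coe_toNNReal _
      (div_nonneg (Real.exp_nonneg _) hZ.le)]
    ring
  simp_rw [e]
  rw [integral_div]

end Helpers

/-- one-step clustering contraction: for one Gibbs step `p'` from
`p ∈ [0,1]^d`, `E[⟨p', Δp'⟩] ≤ (1 - λ/d) ⟨p, Δp⟩ + 5/(2A²)`, where `λ` is the
spectral gap of `Δ = I - D⁻¹C`, characterized by `⟨Δq, Δq⟩ ≥ λ ⟨q, Δq⟩`. -/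
theorem gibbs_one_step_clustering
    (d : ℕ) (hd : 2 ≤ d) (C : Fin d → Fin d → ℝ)
    (hsym : ∀ i j, C i j = C j i)
    (hnonneg : ∀ i j, 0 ≤ C i j)
    (hdiag : ∀ i, C i i = 0)
    (hconn : ∀ i j : Fin d, Relation.ReflTransGen (fun a b => 0 < C a b) i j)
    (c : Fin d → ℝ) (hc : ∀ i, c i = ∑ j, C i j)
    (hcpos : ∀ i, 0 < c i)
    (htot : ∑ i, c i = 1)
    (lam : ℝ) (hlampos : 0 < lam)
    (hlam : ∀ q : Fin d → ℝ,
      lam * (∑ i, c i * q i * (q i - (∑ j, C i j * q j) / c i))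
        ≤ ∑ i, c i * (q i - (∑ j, C i j * q j) / c i)
                * (q i - (∑ j, C i j * q j) / c i))
    (A : ℝ) (hA : 0 < A)
    (p : Fin d → ℝ) (hp : ∀ i, p i ∈ Set.Icc (0:ℝ) 1) :
    ∫ q, (∑ i, c i * q i * (q i - (∑ j, C i j * q j) / c i))
        ∂(gibbsStep d C c A p)
      ≤ (1 - lam / d) * (∑ i, c i * p i * (p i - (∑ j, C i j * p j) / c i))
        + 5 / (2 * A ^ 2) := by
  have hA2 : (0:ℝ) < 2 * A ^ 2 := by positivity
  have hc0 : ∀ i, c i ≠ 0 := fun i => (hcpos i).ne'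
  -- abbreviations
  set f : (Fin d → ℝ) → ℝ :=
    fun q => ∑ i, c i * q i * (q i - (∑ j, C i j * q j) / c i) with hf
  have hfc : Continuous f := by
    refine continuous_finset_sum _ fun i _ => ?_
    exact (continuous_const.mul (continuous_apply i)).mul
      ((continuous_apply i).sub
        ((continuous_finset_sum _ fun j _ => continuous_const.mul (continuous_apply j)).div_const _))
  set m : Fin d → ℝ := fun i => (∑ j, C i j * p j) / c i with hm
  have hm0 : ∀ i, 0 ≤ m i := by
    intro i
    exact div_nonneg
      (Finset.sum_nonneg fun j _ => mul_nonneg (hnonneg i j) (hp j).1) (hcpos i).le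
  have hm1 : ∀ i, m i ≤ 1 := by
    intro i
    rw [hm, div_le_one (hcpos i), hc i]
    exact Finset.sum_le_sum fun j _ => mul_le_of_le_one_right (hnonneg i j) (hp j).2
  set σ : Fin d → ℝ := fun i => Real.sqrt (1 / (2 * A ^ 2 * c i)) with hσ
  have hσpos : ∀ i, 0 < σ i := fun i => Real.sqrt_pos.mpr (by have := hcpos i; positivity)
  have hσ2 : ∀ i, σ i ^ 2 = 1 / (2 * A ^ 2 * c i) := fun i => Real.sq_sqrt (by have := hcpos i; positivity)
  set T : Fin d → ℝ → (Fin d → ℝ) := fun i x => Function.update p i (m i + x) with hT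
  have hTm : ∀ i, Measurable (T i) := by
    intro i
    exact (measurable_update p).comp (measurable_const.add measurable_id)
  have hZpos : ∀ i, 0 < ∫ y in Set.Icc (-(m i)) (1 - m i),
      Real.exp (-y ^ 2 / (2 * σ i ^ 2)) := fun i => weight_integral_pos _ _
  -- the composed integrand
  have hcomp : ∀ i x, f (T i x) = f p + c i * (x ^ 2 - (p i - m i) ^ 2) := by
    intro i x
    have hs : (∑ j, C i j * p j) = c i * m i := by
      simp only [hm]
      rw [mul_comm]
      exact (div_mul_cancel₀ _ (hc0 i)).symm
    simp only [hf, hT]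
    rw [key_alg C hsym hdiag c hc0 p i (m i + x), hs]
    ring
  -- integrability of f with respect to each mapped measure
  have hint : ∀ i, Integrable f
      (Measure.map (T i) (truncGaussLaw (σ i) (m i))) := by
    intro i
    rw [integrable_map_measure hfc.aestronglyMeasurable (hTm i).aemeasurable]
    have e : f ∘ T i = fun x => f p + c i * (x ^ 2 - (p i - m i) ^ 2) :=
      funext fun x => hcomp i x
    rw [e]
    exact truncGauss_integrable _ _ _ (by fun_prop)
  -- one-coordinate bound
  have hterm : ∀ i, ∫ q, f q ∂(Measure.map (T i) (truncGaussLaw (σ i) (m i)))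
      ≤ f p - c i * (p i - m i) ^ 2 + 1 / (2 * A ^ 2) := by
    intro i
    rw [integral_map (hTm i).aemeasurable hfc.aestronglyMeasurable]
    have e1 : ∫ x, f (T i x) ∂(truncGaussLaw (σ i) (m i))
        = ∫ x, (f p + c i * (x ^ 2 - (p i - m i) ^ 2)) ∂(truncGaussLaw (σ i) (m i)) :=
      integral_congr_ae (Filter.Eventually.of_forall fun x => hcomp i x)
    rw [e1, truncGauss_integral _ _ _ (by fun_prop) (hZpos i)]
    have hφc : Continuous fun x : ℝ => Real.exp (-x ^ 2 / (2 * σ i ^ 2)) := by fun_prop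
    have e2 : ∫ x in Set.Icc (-(m i)) (1 - m i),
        (f p + c i * (x ^ 2 - (p i - m i) ^ 2)) * Real.exp (-x ^ 2 / (2 * σ i ^ 2))
        = (f p - c i * (p i - m i) ^ 2) * (∫ x in Set.Icc (-(m i)) (1 - m i),
            Real.exp (-x ^ 2 / (2 * σ i ^ 2)))
          + c i * ∫ x in Set.Icc (-(m i)) (1 - m i),
              x ^ 2 * Real.exp (-x ^ 2 / (2 * σ i ^ 2)) := by
      rw [← MeasureTheory.integral_const_mul, ← MeasureTheory.integral_const_mul,
        ← MeasureTheory.integral_add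
          (((by fun_prop) : Continuous fun x : ℝ => (f p - c i * (p i - m i) ^ 2) *
            Real.exp (-x ^ 2 / (2 * σ i ^ 2))).integrableOn_Icc)
          (((by fun_prop : Continuous fun x : ℝ => c i * (x ^ 2 *
            Real.exp (-x ^ 2 / (2 * σ i ^ 2))))).integrableOn_Icc)]
      refine setIntegral_congr_fun measurableSet_Icc fun x _ => ?_
      ring
    rw [e2]
    rw [div_le_iff₀ (hZpos i)]
    have h3 : ∫ x in Set.Icc (-(m i)) (1 - m i), x ^ 2 * Real.exp (-x ^ 2 / (2 * σ i ^ 2))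
        ≤ σ i ^ 2 * ∫ x in Set.Icc (-(m i)) (1 - m i), Real.exp (-x ^ 2 / (2 * σ i ^ 2)) :=
      sq_weight_integral_le (σ i) (m i) (hσpos i) (hm0 i) (hm1 i)
    have h4 : c i * σ i ^ 2 = 1 / (2 * A ^ 2) := by
      rw [hσ2 i]
      field_simp [hc0 i]
    nlinarith [hZpos i, mul_le_mul_of_nonneg_left h3 (hcpos i).le]
  -- sum up
  have hrepr : gibbsStep d C c A p
      = (d : ℝ≥0∞)⁻¹ • ∑ i, Measure.map (T i) (truncGaussLaw (σ i) (m i)) := rfl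
  rw [hrepr, integral_smul_measure, integral_finset_sum_measure (fun i _ => hint i)]
  have hsum : ∑ i, ∫ q, f q ∂(Measure.map (T i) (truncGaussLaw (σ i) (m i)))
      ≤ (d : ℝ) * f p - (∑ i, c i * (p i - m i) ^ 2) + (d : ℝ) * (1 / (2 * A ^ 2)) := by
    calc ∑ i, ∫ q, f q ∂(Measure.map (T i) (truncGaussLaw (σ i) (m i)))
        ≤ ∑ i, (f p - c i * (p i - m i) ^ 2 + 1 / (2 * A ^ 2)) :=
          Finset.sum_le_sum fun i _ => hterm i
      _ = (d : ℝ) * f p - (∑ i, c i * (p i - m i) ^ 2) + (d : ℝ) * (1 / (2 * A ^ 2)) := by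
          rw [Finset.sum_add_distrib, Finset.sum_sub_distrib, Finset.sum_const,
            Finset.sum_const, Finset.card_univ, Fintype.card_fin, nsmul_eq_mul, nsmul_eq_mul]
  have hd0 : (0:ℝ) < (d : ℝ) := by
    have : 0 < d := lt_of_lt_of_le (by norm_num) hd
    exact_mod_cast this
  have hinv : (0:ℝ) ≤ ((d:ℝ))⁻¹ := by positivity
  have htor : ((d : ℝ≥0∞)⁻¹).toReal = ((d:ℝ))⁻¹ := by
    rw [ENNReal.toReal_inv]
    simp
  rw [htor, smul_eq_mul]
  have hstep2 : ((d:ℝ))⁻¹ * (∑ i, ∫ q, f q ∂(Measure.map (T i) (truncGaussLaw (σ i) (m i))))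
      ≤ ((d:ℝ))⁻¹ * ((d : ℝ) * f p - (∑ i, c i * (p i - m i) ^ 2)
          + (d : ℝ) * (1 / (2 * A ^ 2))) :=
    mul_le_mul_of_nonneg_left hsum hinv
  refine le_trans hstep2 ?_
  have hgap : lam * f p ≤ ∑ i, c i * (p i - m i) ^ 2 := by
    have h0 := hlam p
    have e : ∑ i, c i * (p i - (∑ j, C i j * p j) / c i) * (p i - (∑ j, C i j * p j) / c i)
        = ∑ i, c i * (p i - m i) ^ 2 := by
      refine Finset.sum_congr rfl fun i _ => ?_
      rw [show (∑ j, C i j * p j) / c i = m i from rfl]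
      ring
    rw [e] at h0
    exact h0
  have hdne : ((d:ℝ)) ≠ 0 := hd0.ne'
  have key : ((d:ℝ))⁻¹ * ((d : ℝ) * f p - (∑ i, c i * (p i - m i) ^ 2)
        + (d : ℝ) * (1 / (2 * A ^ 2)))
      = f p - ((d:ℝ))⁻¹ * (∑ i, c i * (p i - m i) ^ 2) + 1 / (2 * A ^ 2) := by
    field_simp
  rw [key]
  show _ ≤ (1 - lam / (d:ℝ)) * f p + 5 / (2 * A ^ 2)
  have h2 : (1 - lam / (d:ℝ)) * f p = f p - ((d:ℝ))⁻¹ * (lam * f p) := by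
    field_simp
  rw [h2]
  have hmul : ((d:ℝ))⁻¹ * (lam * f p) ≤ ((d:ℝ))⁻¹ * ∑ i, c i * (p i - m i) ^ 2 :=
    mul_le_mul_of_nonneg_left hgap hinv
  have h6 : (5:ℝ) / (2 * A ^ 2) = 1 / (2 * A ^ 2) + 4 / (2 * A ^ 2) := by ring
  have h7 : (0:ℝ) ≤ 4 / (2 * A ^ 2) := by positivity
  linarith
end

section
/- If p ∈ ℝ^d with weighted mean p̄ = ∑_i c_i p_i, then for any i, j, the inequality β² (p_i - p_j)² ≤ (2/λ) ⟨p, Δp⟩ holds, where β = min_i c_i and λ is the spectral gap of Δ. -/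
/-- If `p ∈ ℝ^d`, then for any `i, j`,
`β² (p_i - p_j)² ≤ (2/λ) ⟨p, Δp⟩`, where `β = min_i c_i` and `λ` is the spectral
gap of `Δ = I - D⁻¹C` (characterized by the Poincaré inequality on the
orthogonal complement of the constant vector). -/
theorem coordinate_spread_bound
    (d : ℕ) (hd : 2 ≤ d) (C : Fin d → Fin d → ℝ)
    (hsym : ∀ i j, C i j = C j i)
    (hnonneg : ∀ i j, 0 ≤ C i j)
    (hdiag : ∀ i, C i i = 0)
    (hconn : ∀ i j : Fin d, Relation.ReflTransGen (fun a b => 0 < C a b) i j)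
    (c : Fin d → ℝ) (hc : ∀ i, c i = ∑ j, C i j)
    (hcpos : ∀ i, 0 < c i)
    (htot : ∑ i, c i = 1)
    (beta : ℝ) (hbeta : ∀ i, beta ≤ c i) (hbetapos : 0 < beta)
    (lam : ℝ) (hlampos : 0 < lam)
    -- Poincaré inequality characterizing the spectral gap `λ`:
    (hlam : ∀ q : Fin d → ℝ, (∑ i, c i * q i = 0) →
      lam * (∑ i, c i * q i * q i)
        ≤ ∑ i, c i * q i * (q i - (∑ j, C i j * q j) / c i))
    (p : Fin d → ℝ) (i j : Fin d) :
    beta ^ 2 * (p i - p j) ^ 2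
      ≤ (2 / lam) * ∑ i, c i * p i * (p i - (∑ j, C i j * p j) / c i) := by
  have hcne : ∀ k : Fin d, c k ≠ 0 := fun k => (hcpos k).ne'
  obtain ⟨pbar, hpbar⟩ : ∃ x : ℝ, x = ∑ k, c k * p k := ⟨_, rfl⟩
  obtain ⟨q, hqdef⟩ : ∃ q : Fin d → ℝ, ∀ k, q k = p k - pbar :=
    ⟨fun k => p k - pbar, fun _ => rfl⟩
  have hq0 : ∑ k, c k * q k = 0 := by
    simp only [hqdef, mul_sub]
    rw [Finset.sum_sub_distrib, ← Finset.sum_mul, htot, ← hpbar]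
    ring
  have hr : ∀ k, q k - (∑ l, C k l * q l) / c k = p k - (∑ l, C k l * p l) / c k := by
    intro k
    simp only [hqdef]
    have h1 : ∑ l, C k l * (p l - pbar) = (∑ l, C k l * p l) - c k * pbar := by
      simp only [mul_sub]
      rw [Finset.sum_sub_distrib, ← Finset.sum_mul, ← hc k]
    rw [h1, sub_div, mul_comm (c k) pbar, mul_div_assoc, div_self (hcne k), mul_one]
    ring
  have hcsum : ∀ k, c k * (p k - (∑ l, C k l * p l) / c k)
      = c k * p k - ∑ l, C k l * p l := by
    intro k
    rw [mul_sub, mul_div_cancel₀ _ (hcne k)]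
  have hrsum : ∑ k, c k * (p k - (∑ l, C k l * p l) / c k) = 0 := by
    rw [Finset.sum_congr rfl fun k _ => hcsum k, Finset.sum_sub_distrib,
      Finset.sum_comm]
    have h2 : ∀ l : Fin d, ∑ k, C k l * p l = c l * p l := by
      intro l
      rw [← Finset.sum_mul]
      congr 1
      rw [hc l]
      exact Finset.sum_congr rfl fun k _ => hsym k l
    rw [Finset.sum_congr rfl fun l _ => h2 l]
    ring
  have hform : ∑ k, c k * q k * (q k - (∑ l, C k l * q l) / c k)
      = ∑ k, c k * p k * (p k - (∑ l, C k l * p l) / c k) := by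
    have h1 : ∀ k, c k * q k * (q k - (∑ l, C k l * q l) / c k)
        = c k * p k * (p k - (∑ l, C k l * p l) / c k)
          - pbar * (c k * (p k - (∑ l, C k l * p l) / c k)) := by
      intro k
      rw [hr k, hqdef k]
      ring
    rw [Finset.sum_congr rfl fun k _ => h1 k, Finset.sum_sub_distrib,
      ← Finset.mul_sum, hrsum]
    ring
  obtain ⟨Dir, hDir⟩ :
      ∃ x : ℝ, x = ∑ k, c k * p k * (p k - (∑ l, C k l * p l) / c k) := ⟨_, rfl⟩
  rw [← hDir]
  have hpoincare : lam * (∑ k, c k * q k * q k) ≤ Dir := by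
    have h := hlam q hq0
    rw [hform, ← hDir] at h
    exact h
  have hsumnonneg : 0 ≤ ∑ k, c k * q k * q k := by
    apply Finset.sum_nonneg
    intro k _
    have := (hcpos k).le
    nlinarith [sq_nonneg (q k)]
  have hDirnonneg : 0 ≤ Dir :=
    le_trans (by positivity : (0:ℝ) ≤ lam * ∑ k, c k * q k * q k) hpoincare
  have hbeta1 : beta ≤ 1 := by
    have h1 : c i ≤ ∑ k, c k :=
      Finset.single_le_sum (fun k _ => (hcpos k).le) (Finset.mem_univ i)
    rw [htot] at h1
    exact le_trans (hbeta i) h1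
  have hpq : p i - p j = q i - q j := by rw [hqdef i, hqdef j]; ring
  rw [hpq]
  by_cases hij : i = j
  · subst hij
    simp only [sub_self]
    have h0 : (0:ℝ) ≤ (2 / lam) * Dir := mul_nonneg (by positivity) hDirnonneg
    nlinarith
  · have hsub : c i * q i * q i + c j * q j * q j ≤ ∑ k, c k * q k * q k := by
      have h1 : ({i, j} : Finset (Fin d)) ⊆ Finset.univ := Finset.subset_univ _
      have h2 : ∑ k ∈ ({i, j} : Finset (Fin d)), c k * q k * q k
          = c i * q i * q i + c j * q j * q j := Finset.sum_pair hij
      calc c i * q i * q i + c j * q j * q j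
          = ∑ k ∈ ({i, j} : Finset (Fin d)), c k * q k * q k := h2.symm
        _ ≤ ∑ k, c k * q k * q k := by
            apply Finset.sum_le_sum_of_subset_of_nonneg h1
            intro k _ _
            have := (hcpos k).le
            nlinarith [sq_nonneg (q k)]
    have h2i : beta ^ 2 ≤ c i := by nlinarith [hbeta i]
    have h2j : beta ^ 2 ≤ c j := by nlinarith [hbeta j]
    have e1 : beta ^ 2 * (q i - q j) ^ 2
        ≤ 2 * (beta ^ 2 * q i ^ 2) + 2 * (beta ^ 2 * q j ^ 2) := by
      nlinarith [sq_nonneg (q i + q j), sq_nonneg beta]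
    have e2 : beta ^ 2 * q i ^ 2 ≤ c i * (q i * q i) := by
      nlinarith [mul_le_mul_of_nonneg_right h2i (sq_nonneg (q i))]
    have e3 : beta ^ 2 * q j ^ 2 ≤ c j * (q j * q j) := by
      nlinarith [mul_le_mul_of_nonneg_right h2j (sq_nonneg (q j))]
    have key : beta ^ 2 * (q i - q j) ^ 2 ≤ 2 * ∑ k, c k * q k * q k := by
      linarith
    have h5 : (∑ k, c k * q k * q k) ≤ Dir / lam := by
      rw [le_div_iff₀ hlampos, mul_comm]
      exact hpoincare
    have hfinal : 2 * (∑ k, c k * q k * q k) ≤ (2 / lam) * Dir := by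
      calc 2 * (∑ k, c k * q k * q k) ≤ 2 * (Dir / lam) := by linarith
        _ = (2 / lam) * Dir := by ring
    linarith
end
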